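/- Every Boolean function computable by a polynomial-size nondeterministic branching program is computable by a polynomial-size hypergraph program of degree at most 2, and conversely every function computable by a polynomial-size hypergraph program of degree 2 is computable by a polynomial-size nondeterministic branching program (i.e., HGP² = NL/poly as non-uniform classes). -/

import Mathlib

/-- Evaluation of an arc/vertex label: a Boolean constant, or a literal (a variable with a
polarity). -/
def litEval {n : ℕ} (α : Fin n → Bool) : Bool ⊕ (Fin n × Bool) → Bool
  | .inl b => b
  | .inr (i, pol) => α i == pol

/-- A nondeterministic branching program over `n` Boolean variables: a directed graph with
arcs labelled by constants or literals and two distinguished vertices `src` and `tgt`. -/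
structure NBP (n : ℕ) where
  nv : ℕ
  arcs : Finset (Fin nv × Fin nv × (Bool ⊕ (Fin n × Bool)))
  src : Fin nv
  tgt : Fin nv

def NBP.size {n : ℕ} (B : NBP n) : ℕ := B.nv + B.arcs.card

/-- One step along an arc whose label evaluates to 1 under `α`. -/
def NBP.Step {n : ℕ} (B : NBP n) (α : Fin n → Bool) (u v : Fin B.nv) : Prop :=
  ∃ l, (u, v, l) ∈ B.arcs ∧ litEval α l = true

/-- An NBP computes `f` if `f α = 1` iff there is a path from `src` to `tgt` all of whose
labels evaluate to 1 under `α`. -/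
def NBP.Computes {n : ℕ} (B : NBP n) (f : (Fin n → Bool) → Bool) : Prop :=
  ∀ α, f α = true ↔ Relation.ReflTransGen (B.Step α) B.src B.tgt

/-- A hypergraph program over `n` Boolean variables: vertices labelled by constants or
literals; hyperedges are sets of vertices. -/
structure HGP (n : ℕ) where
  nv : ℕ
  edges : Finset (Finset (Fin nv))
  label : Fin nv → Bool ⊕ (Fin n × Bool)

def HGP.size {n : ℕ} (P : HGP n) : ℕ := P.nv + P.edges.card

/-- Degree bound for an HGP: every vertex lies in at most `d` hyperedges. -/
def HGP.degLE {n : ℕ} (P : HGP n) (d : ℕ) : Prop :=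
  ∀ v : Fin P.nv, (P.edges.filter fun e => v ∈ e).card ≤ d

/-- An HGP computes `f` if `f α = 1` iff some independent (pairwise disjoint) set of
hyperedges contains every vertex whose label evaluates to 0 under `α`. -/
def HGP.Computes {n : ℕ} (P : HGP n) (f : (Fin n → Bool) → Bool) : Prop :=
  ∀ α, f α = true ↔
    ∃ S ⊆ P.edges, ((S : Set (Finset (Fin P.nv))).Pairwise fun e f => Disjoint e f) ∧
      ∀ v : Fin P.nv, litEval α (P.label v) = false → ∃ e ∈ S, v ∈ e


namespace NLP
open Finset

abbrev Lab (n : ℕ) := Bool ⊕ (Fin n × Bool)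

noncomputable section
open Classical

def negLab {n : ℕ} : Lab n → Lab n
  | .inl b => .inl !b
  | .inr (i, b) => .inr (i, !b)

lemma litEval_negLab {n : ℕ} (α : Fin n → Bool) (l : Lab n) :
    litEval α (negLab l) = !(litEval α l) := by
  rcases l with b | ⟨i, b⟩
  · rfl
  · simp [negLab, litEval]
    cases α i <;> cases b <;> rfl

def Sem {n : ℕ} (B : NBP n) (α : Fin n → Bool) : Prop :=
  Relation.ReflTransGen (B.Step α) B.src B.tgt

lemma reflTransGen_equiv_iff {A B : Type*} (e : A ≃ B) (r : A → A → Prop) (a b : A) :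
    Relation.ReflTransGen (fun x y => r (e.symm x) (e.symm y)) (e a) (e b) ↔
      Relation.ReflTransGen r a b := by
  constructor
  · intro h
    have := Relation.ReflTransGen.lift (r := fun x y => r (e.symm x) (e.symm y)) e.symm
      (fun x y hxy => hxy) _ _ h
    simpa [Function.onFun] using this
  · intro h
    exact Relation.ReflTransGen.lift e (fun x y hxy => by simpa [Function.onFun] using hxy) _ _ h

/-- Build an NBP from an abstract transition system on a fintype. -/
def ofSys {n : ℕ} (S : Type) [Fintype S] (A : S → S → Lab n → Prop) (s t : S) : NBP n where
  nv := Fintype.card S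
  arcs := Finset.univ.filter (fun x : Fin (Fintype.card S) × Fin (Fintype.card S) × Lab n =>
    A ((Fintype.equivFin S).symm x.1) ((Fintype.equivFin S).symm x.2.1) x.2.2)
  src := Fintype.equivFin S s
  tgt := Fintype.equivFin S t

lemma step_ofSys {n : ℕ} (S : Type) [Fintype S] (A : S → S → Lab n → Prop) (s t : S)
    (α : Fin n → Bool) (x y : Fin (Fintype.card S)) :
    (ofSys S A s t).Step α x y ↔
      ∃ l, A ((Fintype.equivFin S).symm x) ((Fintype.equivFin S).symm y) l ∧
        litEval α l = true := by
  simp only [ofSys, NBP.Step, Finset.mem_filter, Finset.mem_univ, true_and]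
  exact exists_congr fun l => and_congr_left fun _ =>
    ⟨fun h => (Finset.mem_filter.mp h).2, fun h => Finset.mem_filter.mpr ⟨Finset.mem_univ _, h⟩⟩

lemma sem_ofSys {n : ℕ} (S : Type) [Fintype S] (A : S → S → Lab n → Prop) (s t : S)
    (α : Fin n → Bool) :
    Sem (ofSys S A s t) α ↔
      Relation.ReflTransGen (fun a b => ∃ l, A a b l ∧ litEval α l = true) s t := by
  unfold Sem
  have h1 : ∀ x y, (ofSys S A s t).Step α x y ↔
      (fun a b => ∃ l, A a b l ∧ litEval α l = true)
        ((Fintype.equivFin S).symm x) ((Fintype.equivFin S).symm y) := by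
    intro x y; exact step_ofSys S A s t α x y
  have key := reflTransGen_equiv_iff (Fintype.equivFin S)
    (fun a b => ∃ l, A a b l ∧ litEval α l = true) s t
  rw [← key]
  constructor
  · exact fun h => Relation.ReflTransGen.mono (fun x y hxy => (h1 x y).mp hxy) _ _ h
  · exact fun h => Relation.ReflTransGen.mono (fun x y hxy => (h1 x y).mpr hxy) _ _ h

lemma card_lab (n : ℕ) : Fintype.card (Lab n) = 2 + 2 * n := by
  simp [Lab, Fintype.card_sum, Fintype.card_prod, mul_comm]

lemma size_ofSys {n : ℕ} (S : Type) [Fintype S] (A : S → S → Lab n → Prop) (s t : S) :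
    (ofSys S A s t).size ≤ (Fintype.card S + 1) ^ 2 * (2 + 2 * n) := by
  have h1 : (ofSys S A s t).arcs.card ≤ Fintype.card S * (Fintype.card S * (2 + 2 * n)) := by
    calc (ofSys S A s t).arcs.card ≤ (Finset.univ :
        Finset (Fin (Fintype.card S) × Fin (Fintype.card S) × Lab n)).card :=
          Finset.card_filter_le _ _
      _ = Fintype.card S * (Fintype.card S * (2 + 2 * n)) := by
          simp [Fintype.card_prod, card_lab]
          try omega
  have : (ofSys S A s t).size = Fintype.card S + (ofSys S A s t).arcs.card := rfl
  rw [this]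
  nlinarith [Nat.zero_le (Fintype.card S)]

end
end NLP

namespace NLP
noncomputable section
open Classical Finset

variable {n : ℕ} (B : NBP n) (α : Fin n → Bool)

/-- Vertices reachable from the source within `i` steps. -/
def Rset : ℕ → Finset (Fin B.nv)
  | 0 => {B.src}
  | i + 1 => Rset i ∪ Finset.univ.filter (fun v => ∃ u ∈ Rset i, B.Step α u v)

lemma Rset_subset_succ (i : ℕ) : Rset B α i ⊆ Rset B α (i + 1) := by
  rw [Rset]; exact Finset.subset_union_left

lemma Rset_mono {i j : ℕ} (h : i ≤ j) : Rset B α i ⊆ Rset B α j := by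
  induction j with
  | zero => simpa [Nat.le_zero.mp h]
  | succ j ih =>
    rcases Nat.lt_or_ge i (j+1) with h' | h'
    · exact (ih (Nat.lt_succ_iff.mp h')).trans (Rset_subset_succ B α j)
    · have : i = j + 1 := le_antisymm h h'
      subst this; exact subset_rfl

lemma src_mem_Rset (i : ℕ) : B.src ∈ Rset B α i :=
  Rset_mono B α (Nat.zero_le i) (by simp [Rset])

lemma mem_Rset_succ_of_step {u v : Fin B.nv} {i : ℕ} (hu : u ∈ Rset B α i)
    (h : B.Step α u v) : v ∈ Rset B α (i + 1) := by
  rw [Rset]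
  apply Finset.mem_union_right
  simp only [Finset.mem_filter, Finset.mem_univ, true_and]
  exact ⟨u, hu, h⟩

lemma Rset_stab {i : ℕ} (h : Rset B α (i + 1) = Rset B α i) :
    ∀ j, Rset B α (i + j) = Rset B α i := by
  intro j
  induction j with
  | zero => rfl
  | succ j ih =>
    have : i + (j + 1) = (i + j) + 1 := by omega
    rw [this, Rset, ih, ← Rset, h]

lemma exists_Rset_stab : ∃ i ≤ B.nv, Rset B α (i + 1) = Rset B α i := by
  by_contra hc
  push_neg at hc
  have key : ∀ i, i ≤ B.nv + 1 → i + 1 ≤ (Rset B α i).card := by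
    intro i hi
    induction i with
    | zero => simp [Rset]
    | succ i ih =>
      have h1 : i + 1 ≤ (Rset B α i).card := ih (by omega)
      have h2 : Rset B α i ⊂ Rset B α (i + 1) :=
        (Finset.ssubset_iff_of_subset (Rset_subset_succ B α i)).mpr (by
          rcases Finset.exists_of_ssubset (lt_of_le_of_ne (Rset_subset_succ B α i)
            (fun h => (hc i (by omega)) h.symm)) with ⟨x, hx1, hx2⟩
          exact ⟨x, hx1, hx2⟩)
      have := Finset.card_lt_card h2
      omega
  have h1 := key (B.nv + 1) (le_refl _)
  have h2 : (Rset B α (B.nv + 1)).card ≤ B.nv := by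
    have := Finset.card_le_card (Finset.subset_univ (Rset B α (B.nv + 1)))
    simpa using this
  omega

lemma mem_Rset_nv {v : Fin B.nv} {k : ℕ} (h : v ∈ Rset B α k) : v ∈ Rset B α B.nv := by
  obtain ⟨i, hi, hstab⟩ := exists_Rset_stab B α
  rcases Nat.le_total k B.nv with h' | h'
  · exact Rset_mono B α h' h
  · rcases Nat.le_total k i with h'' | h''
    · exact Rset_mono B α (h''.trans hi) h
    · have : Rset B α k = Rset B α i := by
        have := Rset_stab B α hstab (k - i)
        rwa [Nat.add_sub_cancel' h''] at this
      exact Rset_mono B α hi (this ▸ h)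

lemma reach_iff_mem_Rset (v : Fin B.nv) :
    Relation.ReflTransGen (B.Step α) B.src v ↔ v ∈ Rset B α B.nv := by
  constructor
  · intro h
    induction h with
    | refl => exact src_mem_Rset B α _
    | tail _ hstep ih =>
      exact mem_Rset_nv B α (mem_Rset_succ_of_step B α ih hstep)
  · intro h
    have key : ∀ i (w : Fin B.nv), w ∈ Rset B α i →
        Relation.ReflTransGen (B.Step α) B.src w := by
      intro i
      induction i with
      | zero => intro w hw; simp [Rset] at hw; subst hw; rfl
      | succ i ih =>
        intro w hw
        rw [Rset] at hw
        rcases Finset.mem_union.mp hw with h' | h'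
        · exact ih w h'
        · simp only [Finset.mem_filter] at h'
          obtain ⟨u, hu, hstep⟩ := h'.2
          exact (ih u hu).tail hstep
    exact key _ v h

lemma sem_iff_tgt_mem : Sem B α ↔ B.tgt ∈ Rset B α B.nv := reach_iff_mem_Rset B α B.tgt

/-- No true-labelled arc from u to v. -/
lemma not_step_iff (u v : Fin B.nv) :
    ¬ B.Step α u v ↔ ∀ l, (u, v, l) ∈ B.arcs → litEval α l = false := by
  unfold NBP.Step
  push_neg
  constructor
  · intro h l hl
    have := h l hl
    simpa using this
  · intro h l hl
    simp [h l hl]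

end
end NLP

namespace NLP
noncomputable section
open Classical Finset

variable {n : ℕ}

/-- Gadget: accepts iff `v` is reachable from the source of `B` within `j` steps. -/
def memb (B : NBP n) (j : ℕ) (v : Fin B.nv) : NBP n :=
  ofSys (Fin B.nv × Fin (j + 1))
    (fun x y l => (y.2 : ℕ) = (x.2 : ℕ) + 1 ∧ ((y.1 = x.1 ∧ l = .inl true) ∨
      (x.1, y.1, l) ∈ B.arcs))
    (B.src, 0) (v, Fin.last j)

lemma sem_memb (B : NBP n) (j : ℕ) (v : Fin B.nv) (α : Fin n → Bool) :
    Sem (memb B j v) α ↔ v ∈ Rset B α j := by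
  rw [memb, sem_ofSys]
  set astep := fun (a b : Fin B.nv × Fin (j + 1)) =>
    ∃ l, ((b.2 : ℕ) = (a.2 : ℕ) + 1 ∧ ((b.1 = a.1 ∧ l = Sum.inl true) ∨
      (a.1, b.1, l) ∈ B.arcs)) ∧ litEval α l = true with hastep
  constructor
  · intro h
    have key : ∀ x : Fin B.nv × Fin (j + 1),
        Relation.ReflTransGen astep (B.src, 0) x → x.1 ∈ Rset B α (x.2 : ℕ) := by
      intro x hx
      induction hx with
      | refl => simp [Rset]
      | tail _ hstep ih =>
        rename_i y z _
        obtain ⟨l, ⟨h2, h3⟩, h4⟩ := hstep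
        rw [h2]
        rcases h3 with ⟨he, _⟩ | harc
        · rw [he]
          exact Rset_subset_succ B α _ ih
        · exact mem_Rset_succ_of_step B α ih ⟨l, harc, h4⟩
    have := key (v, Fin.last j) h
    simpa using this
  · intro h
    have key : ∀ i (hi : i ≤ j) (w : Fin B.nv), w ∈ Rset B α i →
        Relation.ReflTransGen astep (B.src, 0) (w, ⟨i, by omega⟩) := by
      intro i
      induction i with
      | zero =>
        intro _ w hw
        simp [Rset] at hw
        subst hw
        rfl
      | succ i ih =>
        intro hi w hw
        rw [Rset] at hw
        rcases Finset.mem_union.mp hw with h' | h'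
        · refine (ih (by omega) w h').tail ?_
          exact ⟨.inl true, ⟨by simp, Or.inl ⟨rfl, rfl⟩⟩, rfl⟩
        · simp only [Finset.mem_filter] at h'
          obtain ⟨u, hu, l, harc, hl⟩ := h'.2
          exact (ih (by omega) u hu).tail ⟨l, ⟨by simp, Or.inr harc⟩, hl⟩
    exact key j le_rfl v h

lemma size_memb_le (B : NBP n) (j : ℕ) (v : Fin B.nv) :
    (memb B j v).size ≤ (B.nv * (j + 1) + 1) ^ 2 * (2 + 2 * n) := by
  have := size_ofSys (n := n) (Fin B.nv × Fin (j + 1))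
    (fun x y l => (y.2 : ℕ) = (x.2 : ℕ) + 1 ∧ ((y.1 = x.1 ∧ l = .inl true) ∨
      (x.1, y.1, l) ∈ B.arcs)) (B.src, 0) (v, Fin.last j)
  rw [Fintype.card_prod, Fintype.card_fin, Fintype.card_fin] at this
  exact this

/-- Gadget: a chain that accepts iff all labels in the list evaluate to true. -/
def chainN (ls : List (Lab n)) : NBP n :=
  ofSys (Fin (ls.length + 1))
    (fun a b l => ∃ h : (a : ℕ) < ls.length, (b : ℕ) = (a : ℕ) + 1 ∧ l = ls.get ⟨a, h⟩)
    0 (Fin.last _)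

lemma sem_chainN (ls : List (Lab n)) (α : Fin n → Bool) :
    Sem (chainN ls) α ↔ ∀ l ∈ ls, litEval α l = true := by
  rw [chainN, sem_ofSys]
  set astep := fun (a b : Fin (ls.length + 1)) =>
    ∃ l, (∃ h : (a : ℕ) < ls.length, (b : ℕ) = (a : ℕ) + 1 ∧ l = ls.get ⟨a, h⟩) ∧
      litEval α l = true with hastep
  constructor
  · intro h l hl
    obtain ⟨k, hkl⟩ := List.mem_iff_get.mp hl
    have key : ∀ x : Fin (ls.length + 1), Relation.ReflTransGen astep 0 x →
        ∀ m (hm : m < ls.length), m < (x : ℕ) → litEval α (ls.get ⟨m, hm⟩) = true := by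
      intro x hx
      induction hx with
      | refl => intro m hm hmx; simp at hmx
      | tail _ hstep ih =>
        rename_i y z _
        obtain ⟨l', ⟨hy, hz, hl'⟩, heval⟩ := hstep
        intro m hm hmz
        rcases Nat.lt_or_ge m (y : ℕ) with h' | h'
        · exact ih m hm h'
        · have : m = (y : ℕ) := by omega
          subst this
          rw [hl'] at heval
          convert heval
    have := key (Fin.last _) h k.val k.isLt (by simp)
    simp only [Fin.eta] at this
    exact hkl ▸ this
  · intro h
    have key : ∀ i (hi : i ≤ ls.length),
        Relation.ReflTransGen astep 0 ⟨i, by omega⟩ := by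
      intro i
      induction i with
      | zero => intro _; rfl
      | succ i ih =>
        intro hi
        refine (ih (by omega)).tail ?_
        have hlt : i < ls.length := hi
        exact ⟨ls.get ⟨i, hlt⟩, ⟨hlt, rfl, rfl⟩, h _ (List.get_mem ls ⟨i, hlt⟩)⟩
    exact key ls.length le_rfl

lemma size_chainN_le (ls : List (Lab n)) :
    (chainN ls).size ≤ (ls.length + 2) ^ 2 * (2 + 2 * n) := by
  have := size_ofSys (n := n) (Fin (ls.length + 1))
    (fun a b l => ∃ h : (a : ℕ) < ls.length, (b : ℕ) = (a : ℕ) + 1 ∧ l = ls.get ⟨a, h⟩)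
    0 (Fin.last _)
  rw [Fintype.card_fin] at this
  exact this

/-- The always-accepting trivial gadget. -/
def trivTrue : NBP n := chainN []

lemma sem_trivTrue (α : Fin n → Bool) : Sem (trivTrue (n := n)) α := by
  rw [trivTrue, sem_chainN]
  simp

/-- Gadget: accepts iff there is no true-labelled arc from u to v in B. -/
def allFalseG (B : NBP n) (u v : Fin B.nv) : NBP n :=
  chainN (((B.arcs.filter (fun a => a.1 = u ∧ a.2.1 = v)).toList).map
    (fun a => negLab a.2.2))

lemma sem_allFalseG (B : NBP n) (u v : Fin B.nv) (α : Fin n → Bool) :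
    Sem (allFalseG B u v) α ↔ ¬ B.Step α u v := by
  rw [allFalseG, sem_chainN, not_step_iff]
  constructor
  · intro h l hl
    have := h (negLab l) (by
      simp only [List.mem_map]
      exact ⟨(u, v, l), by simp [Finset.mem_toList, hl], rfl⟩)
    rw [litEval_negLab] at this
    simpa using this
  · intro h l hl
    simp only [List.mem_map, Finset.mem_toList, Finset.mem_filter] at hl
    obtain ⟨a, ⟨ha, hau, hav⟩, rfl⟩ := hl
    rw [litEval_negLab]
    have : litEval α a.2.2 = false := by
      apply h
      have : a = (u, v, a.2.2) := by
        rcases a with ⟨a1, a2, a3⟩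
        simp at hau hav
        simp [hau, hav]
      rwa [this] at ha
    simp [this]

lemma size_allFalseG_le (B : NBP n) (u v : Fin B.nv) :
    (allFalseG B u v).size ≤ (B.arcs.card + 2) ^ 2 * (2 + 2 * n) := by
  have h1 := size_chainN_le (n := n) (((B.arcs.filter
    (fun a => a.1 = u ∧ a.2.1 = v)).toList).map (fun a => negLab a.2.2))
  have h2 : (((B.arcs.filter (fun a => a.1 = u ∧ a.2.1 = v)).toList).map
      (fun a => negLab a.2.2)).length ≤ B.arcs.card := by
    rw [List.length_map, Finset.length_toList]
    exact Finset.card_filter_le _ _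
  refine h1.trans ?_
  have : (((B.arcs.filter (fun a => a.1 = u ∧ a.2.1 = v)).toList).map
      (fun a => negLab a.2.2)).length + 2 ≤ B.arcs.card + 2 := by omega
  exact Nat.mul_le_mul_right _ (Nat.pow_le_pow_left this 2)

/-- The never-accepting gadget. -/
def deadNBP : NBP n := ofSys (Fin 2) (fun _ _ _ => False) 0 1

lemma sem_deadNBP (α : Fin n → Bool) : ¬ Sem (deadNBP (n := n)) α := by
  rw [deadNBP, sem_ofSys]
  intro h
  have hn : ∀ b : Fin 2, ¬ (∃ l : Lab n, False ∧ litEval α l = true) :=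
    fun _ hbc => Exists.elim hbc (fun _ hl => hl.1)
  have := (Relation.reflTransGen_iff_eq hn).mp h
  exact absurd this (by decide)

lemma size_deadNBP_le : (deadNBP (n := n)).size ≤ (2 + 1) ^ 2 * (2 + 2 * n) := by
  have := size_ofSys (n := n) (Fin 2) (fun _ _ _ => False) 0 1
  rw [Fintype.card_fin] at this
  exact this

end
end NLP

namespace NLP
noncomputable section
open Classical Finset

variable {n : ℕ} {Q ι : Type} [Fintype Q] [Fintype ι]

def asys (ep ex : ι → Q) (box : ι → NBP n) :
    (Q ⊕ Σ i : ι, Fin (box i).nv) → (Q ⊕ Σ i : ι, Fin (box i).nv) → Lab n → Prop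
  | .inl a, .inr q, l => ep q.1 = a ∧ q.2 = (box q.1).src ∧ l = .inl true
  | .inr p, .inl b, l => ex p.1 = b ∧ p.2 = (box p.1).tgt ∧ l = .inl true
  | .inr p, .inr q, l =>
      ∃ (i : ι) (g g' : Fin (box i).nv), p = ⟨i, g⟩ ∧ q = ⟨i, g'⟩ ∧
        (g, g', l) ∈ (box i).arcs
  | .inl _, .inl _, _ => False

/-- Assemble a "spine" transition system whose transitions are guarded by
sub-NBPs ("boxes") into a single NBP. -/
def assemble (ep ex : ι → Q) (box : ι → NBP n) (s t : Q) : NBP n :=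
  ofSys (Q ⊕ Σ i : ι, Fin (box i).nv) (asys ep ex box) (.inl s) (.inl t)

lemma sem_assemble (ep ex : ι → Q) (box : ι → NBP n) (s t : Q) (α : Fin n → Bool) :
    Sem (assemble ep ex box s t) α ↔
      Relation.ReflTransGen (fun a b => ∃ i, ep i = a ∧ ex i = b ∧ Sem (box i) α) s t := by
  rw [assemble, sem_ofSys]
  set abs := fun a b : Q => ∃ i, ep i = a ∧ ex i = b ∧ Sem (box i) α with habs
  set cstep := fun x y : Q ⊕ Σ i : ι, Fin (box i).nv =>
    ∃ l, asys ep ex box x y l ∧ litEval α l = true with hcstep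
  constructor
  · intro h
    have key : ∀ x, Relation.ReflTransGen cstep (Sum.inl s) x →
        (∀ a, x = Sum.inl a → Relation.ReflTransGen abs s a) ∧
        (∀ (i : ι) (g : Fin (box i).nv), x = Sum.inr ⟨i, g⟩ →
          Relation.ReflTransGen abs s (ep i) ∧
          Relation.ReflTransGen ((box i).Step α) (box i).src g) := by
      intro x hx
      induction hx with
      | refl =>
        constructor
        · intro a ha
          obtain rfl : s = a := by injection ha
          rfl
        · intro i g hig; exact absurd hig (by simp)
      | @tail y z hyx hstep ih =>
        obtain ⟨l, hasys, heval⟩ := hstep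
        constructor
        · intro b hb
          subst hb
          cases y with
          | inl a => exact hasys.elim
          | inr p =>
            obtain ⟨hex, hg, hl⟩ := hasys
            obtain ⟨i, g⟩ := p
            have h2 := ih.2 i g rfl
            simp only at hex hg
            subst hg
            exact hex ▸ (h2.1.tail ⟨i, rfl, rfl, h2.2⟩)
        · intro i g hig
          subst hig
          cases y with
          | inl a =>
            obtain ⟨hep, hg, hl⟩ := hasys
            simp only at hep hg
            subst hg
            exact ⟨hep ▸ ih.1 a rfl, Relation.ReflTransGen.refl⟩
          | inr p =>
            obtain ⟨i0, g0, g1, hp, hq, harc⟩ := hasys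
            subst hp
            obtain ⟨rfl, hg1⟩ := Sigma.mk.inj_iff.mp hq
            rw [heq_eq_eq] at hg1
            subst hg1
            have h2 := ih.2 i g0 rfl
            exact ⟨h2.1, h2.2.tail ⟨l, harc, heval⟩⟩
    exact (key (Sum.inl t) h).1 t rfl
  · intro h
    induction h with
    | refl => rfl
    | @tail a b hab hstep ih =>
      obtain ⟨i, hep, hex, hsem⟩ := hstep
      have e1 : cstep (Sum.inl a) (Sum.inr ⟨i, (box i).src⟩) :=
        ⟨Sum.inl true, ⟨hep, rfl, rfl⟩, rfl⟩
      have lift : Relation.ReflTransGen cstep (Sum.inr ⟨i, (box i).src⟩)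
          (Sum.inr ⟨i, (box i).tgt⟩) := by
        refine Relation.ReflTransGen.lift
          (fun g : Fin (box i).nv => (Sum.inr ⟨i, g⟩ : Q ⊕ Σ j : ι, Fin (box j).nv)) ?_ _ _ hsem
        intro x y hxy
        obtain ⟨l, harc, hev⟩ := hxy
        exact ⟨l, ⟨i, x, y, rfl, rfl, harc⟩, hev⟩
      have e2 : cstep (Sum.inr ⟨i, (box i).tgt⟩) (Sum.inl b) :=
        ⟨Sum.inl true, ⟨hex, rfl, rfl⟩, rfl⟩
      exact ih.trans (((Relation.ReflTransGen.single e1).trans lift).tail e2)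

lemma size_assemble_le (ep ex : ι → Q) (box : ι → NBP n) (s t : Q) :
    (assemble ep ex box s t).size ≤
      (Fintype.card Q + (∑ i : ι, (box i).nv) + 1) ^ 2 * (2 + 2 * n) := by
  have := size_ofSys (Q ⊕ Σ i : ι, Fin (box i).nv) (asys ep ex box)
    (Sum.inl s) (Sum.inl t)
  rw [Fintype.card_sum, Fintype.card_sigma] at this
  simpa [Fintype.card_fin, assemble] using this

end
end NLP

namespace NLP
noncomputable section
open Classical Finset

variable {n : ℕ}

lemma sem_ite (c : Prop) [inst : Decidable c] (X : NBP n) (α : Fin n → Bool) :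
    Sem (if c then X else deadNBP) α ↔ c ∧ Sem X α := by
  by_cases h : c
  · simp [h]
  · simp [h, sem_deadNBP, sem_deadNBP α]

/-- State space of the inductive-counting machine: (tag, i, c, v, cnt, u, d). -/
abbrev Ph (M : ℕ) := Fin 6 × Fin (M+1) × Fin (M+1) × Fin (M+1) × Fin (M+1) ×
  Fin (M+1) × Fin (M+1)

def st {M : ℕ} (tag : Fin 6) (i c v cnt u d : Fin (M+1)) : Ph M := (tag, i, c, v, cnt, u, d)

lemma st_inj {M : ℕ} {t t' : Fin 6} {i c v cnt u d i' c' v' cnt' u' d' : Fin (M+1)} :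
    st t i c v cnt u d = st t' i' c' v' cnt' u' d' ↔
      t = t' ∧ i = i' ∧ c = c' ∧ v = v' ∧ cnt = cnt' ∧ u = u' ∧ d = d' := by
  simp [st, Prod.ext_iff]

section ISdef

variable (B : NBP n)

def z0 : Fin (B.nv + 1) := ⟨0, Nat.succ_pos _⟩
def oneC : Fin (B.nv + 1) := ⟨1, Nat.succ_lt_succ B.src.pos⟩
abbrev lastS : Fin (B.nv + 1) := Fin.last B.nv

abbrev I1 := Fin B.nv × Fin (B.nv+1)
abbrev I2 := Fin B.nv × Fin (B.nv+1) × Fin B.nv × Fin B.nv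
abbrev I3 := Fin B.nv × Fin (B.nv+1) × Fin B.nv × Fin (B.nv+1)
abbrev I4 := Fin B.nv × Fin (B.nv+1) × Fin B.nv × Fin (B.nv+1) × Fin B.nv × Fin (B.nv+1)
abbrev I5 := Fin B.nv × Fin (B.nv+1) × Fin B.nv × Fin (B.nv+1) × Fin B.nv × Fin B.nv
abbrev I8 := Fin B.nv × Fin (B.nv+1) × Fin (B.nv+1)
abbrev I9 := Fin (B.nv+1)
abbrev I10 := Fin (B.nv+1) × Fin B.nv × Fin (B.nv+1)
abbrev I11 := Fin (B.nv+1) × Fin B.nv × Fin B.nv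

def ISι := I1 B ⊕ I2 B ⊕ I3 B ⊕ I4 B ⊕ I5 B ⊕ I5 B ⊕ I3 B ⊕ I8 B ⊕ I9 B ⊕
  I10 B ⊕ I11 B ⊕ I9 B

instance : Fintype (ISι B) := by unfold ISι; infer_instance

/-- All transitions of the counting machine: (entry, exit, guard box). -/
def trans3 : ISι B → Ph B.nv × Ph B.nv × NBP n
  | .inl (i, c) =>
      (st 0 i.castSucc c (z0 B) (z0 B) (z0 B) (z0 B),
       st 1 i.castSucc c (z0 B) (z0 B) (z0 B) (z0 B), trivTrue)
  | .inr (.inl (i, c, v, cnt)) =>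
      (st 1 i.castSucc c v.castSucc cnt.castSucc (z0 B) (z0 B),
       st 1 i.castSucc c v.succ cnt.succ (z0 B) (z0 B), memb B (i.val + 1) v)
  | .inr (.inr (.inl (i, c, v, cnt))) =>
      (st 1 i.castSucc c v.castSucc cnt (z0 B) (z0 B),
       st 2 i.castSucc c v.castSucc cnt (z0 B) (z0 B), trivTrue)
  | .inr (.inr (.inr (.inl (i, c, v, cnt, u, d)))) =>
      (st 2 i.castSucc c v.castSucc cnt u.castSucc d,
       st 2 i.castSucc c v.castSucc cnt u.succ d, trivTrue)
  | .inr (.inr (.inr (.inr (.inl (i, c, v, cnt, u, d))))) =>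
      (st 2 i.castSucc c v.castSucc cnt u.castSucc d.castSucc,
       st 3 i.castSucc c v.castSucc cnt u.castSucc d.castSucc,
       if u ≠ v then memb B i.val u else deadNBP)
  | .inr (.inr (.inr (.inr (.inr (.inl (i, c, v, cnt, u, d)))))) =>
      (st 3 i.castSucc c v.castSucc cnt u.castSucc d.castSucc,
       st 2 i.castSucc c v.castSucc cnt u.succ d.succ, allFalseG B u v)
  | .inr (.inr (.inr (.inr (.inr (.inr (.inl (i, c, v, cnt))))))) =>
      (st 2 i.castSucc c v.castSucc cnt (lastS B) c,
       st 1 i.castSucc c v.succ cnt (z0 B) (z0 B), trivTrue)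
  | .inr (.inr (.inr (.inr (.inr (.inr (.inr (.inl (i, c, cnt)))))))) =>
      (st 1 i.castSucc c (lastS B) cnt (z0 B) (z0 B),
       st 0 i.succ cnt (z0 B) (z0 B) (z0 B) (z0 B), trivTrue)
  | .inr (.inr (.inr (.inr (.inr (.inr (.inr (.inr (.inl c)))))))) =>
      (st 0 (lastS B) c (z0 B) (z0 B) (z0 B) (z0 B),
       st 4 (z0 B) c (z0 B) (z0 B) (z0 B) (z0 B), trivTrue)
  | .inr (.inr (.inr (.inr (.inr (.inr (.inr (.inr (.inr (.inl (c, u, d)))))))))) =>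
      (st 4 (z0 B) c (z0 B) (z0 B) u.castSucc d,
       st 4 (z0 B) c (z0 B) (z0 B) u.succ d, trivTrue)
  | .inr (.inr (.inr (.inr (.inr (.inr (.inr (.inr (.inr (.inr (.inl (c, u, d))))))))))) =>
      (st 4 (z0 B) c (z0 B) (z0 B) u.castSucc d.castSucc,
       st 4 (z0 B) c (z0 B) (z0 B) u.succ d.succ,
       if u ≠ B.tgt then memb B B.nv u else deadNBP)
  | .inr (.inr (.inr (.inr (.inr (.inr (.inr (.inr (.inr (.inr (.inr c)))))))))) =>
      (st 4 (z0 B) c (z0 B) (z0 B) (lastS B) c,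
       st 5 (z0 B) (z0 B) (z0 B) (z0 B) (z0 B) (z0 B), trivTrue)

def startSt : Ph B.nv := st 0 (z0 B) (oneC B) (z0 B) (z0 B) (z0 B) (z0 B)
def acceptSt : Ph B.nv := st 5 (z0 B) (z0 B) (z0 B) (z0 B) (z0 B) (z0 B)

/-- The complementing (inductive counting) NBP. -/
def ISmach : NBP n :=
  assemble (fun i => (trans3 B i).1) (fun i => (trans3 B i).2.1)
    (fun i => (trans3 B i).2.2) (startSt B) (acceptSt B)

def AStep (α : Fin n → Bool) (a b : Ph B.nv) : Prop :=
  ∃ i : ISι B, (trans3 B i).1 = a ∧ (trans3 B i).2.1 = b ∧ Sem (trans3 B i).2.2 α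

lemma sem_ISmach_iff (α : Fin n → Bool) :
    Sem (ISmach B) α ↔ Relation.ReflTransGen (AStep B α) (startSt B) (acceptSt B) := by
  rw [ISmach, sem_assemble]
  rfl

end ISdef
end
end NLP

namespace NLP
noncomputable section
open Classical Finset

variable {n : ℕ} (B : NBP n) (α : Fin n → Bool)

lemma Rcard_le (i : ℕ) : (Rset B α i).card ≤ B.nv := by
  have := Finset.card_le_univ (Rset B α i)
  simpa using this

lemma filter_lt_succ_mem {s : Finset (Fin B.nv)} {v : Fin B.nv} (hv : v ∈ s) :
    (s.filter (fun w => w.val < v.val + 1)).card =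
      (s.filter (fun w => w.val < v.val)).card + 1 := by
  have h1 : s.filter (fun w => w.val < v.val + 1) =
      insert v (s.filter (fun w => w.val < v.val)) := by
    ext w
    simp only [Finset.mem_filter, Finset.mem_insert]
    constructor
    · rintro ⟨hw, hlt⟩
      rcases Nat.lt_or_ge w.val v.val with h | h
      · exact Or.inr ⟨hw, h⟩
      · exact Or.inl (Fin.ext (by omega))
    · rintro (rfl | ⟨hw, hlt⟩)
      · exact ⟨hv, by omega⟩
      · exact ⟨hw, by omega⟩
  rw [h1, Finset.card_insert_of_notMem (by simp)]

lemma filter_lt_succ_not_mem {s : Finset (Fin B.nv)} {vv : ℕ}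
    (hv : ∀ w ∈ s, w.val ≠ vv) :
    s.filter (fun w => w.val < vv + 1) = s.filter (fun w => w.val < vv) := by
  ext w
  simp only [Finset.mem_filter, and_congr_right_iff]
  intro hw
  have := hv w hw
  omega

lemma filter_lt_top (s : Finset (Fin B.nv)) : s.filter (fun w => w.val < B.nv) = s :=
  Finset.filter_true_of_mem (fun w _ => w.isLt)

/-- Invariant pieces for the counting machine. -/
def LvlInv (i c : Fin (B.nv+1)) : Prop := c.val = (Rset B α i.val).card

def ScanInv (i c v cnt : Fin (B.nv+1)) : Prop :=
  i.val < B.nv ∧ c.val = (Rset B α i.val).card ∧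
    cnt.val = ((Rset B α (i.val+1)).filter (fun w => w.val < v.val)).card

def NvT (i : ℕ) (vv : Fin B.nv) (u d : Fin (B.nv+1)) : Prop :=
  ∃ T : Finset (Fin B.nv), T ⊆ Rset B α i ∧ T.card = d.val ∧
    ∀ w ∈ T, w.val < u.val ∧ w ≠ vv ∧ ¬ B.Step α w vv

def NverInv (i c v cnt u d : Fin (B.nv+1)) : Prop :=
  ScanInv B α i c v cnt ∧ ∃ hv : v.val < B.nv, NvT B α i.val ⟨v.val, hv⟩ u d

def Nver2Inv (i c v cnt u d : Fin (B.nv+1)) : Prop :=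
  NverInv B α i c v cnt u d ∧ d.val < B.nv ∧
    (∃ hu : u.val < B.nv, (⟨u.val, hu⟩ : Fin B.nv) ∈ Rset B α i.val ∧ u.val ≠ v.val)

def FinTInv (c u d : Fin (B.nv+1)) : Prop :=
  c.val = (Rset B α B.nv).card ∧
    ∃ T : Finset (Fin B.nv), T ⊆ Rset B α B.nv ∧ T.card = d.val ∧
      ∀ w ∈ T, w.val < u.val ∧ w ≠ B.tgt

def Inv (x : Ph B.nv) : Prop :=
  (x.1 = 0 → LvlInv B α x.2.1 x.2.2.1) ∧
  (x.1 = 1 → ScanInv B α x.2.1 x.2.2.1 x.2.2.2.1 x.2.2.2.2.1) ∧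
  (x.1 = 2 → NverInv B α x.2.1 x.2.2.1 x.2.2.2.1 x.2.2.2.2.1 x.2.2.2.2.2.1 x.2.2.2.2.2.2) ∧
  (x.1 = 3 → Nver2Inv B α x.2.1 x.2.2.1 x.2.2.2.1 x.2.2.2.2.1 x.2.2.2.2.2.1 x.2.2.2.2.2.2) ∧
  (x.1 = 4 → FinTInv B α x.2.2.1 x.2.2.2.2.2.1 x.2.2.2.2.2.2) ∧
  (x.1 = 5 → B.tgt ∉ Rset B α B.nv)

lemma inv_sound : ∀ x, Relation.ReflTransGen (AStep B α) (startSt B) x → Inv B α x := by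
  intro x hx
  induction hx with
  | refl =>
    simp only [Inv, startSt, st]
    refine ⟨fun _ => ?_, fun h => absurd h (by decide), fun h => absurd h (by decide),
      fun h => absurd h (by decide), fun h => absurd h (by decide),
      fun h => absurd h (by decide)⟩
    show (oneC B).val = (Rset B α (z0 B).val).card
    have : (Rset B α 0) = {B.src} := rfl
    simp [oneC, z0, this]
  | @tail y z hyx hstep ih =>
    obtain ⟨idx, hep, hex, hsem⟩ := hstep
    subst hep hex
    rcases idx with ⟨i, c⟩ | ⟨i, c, v, cnt⟩ | ⟨i, c, v, cnt⟩ | ⟨i, c, v, cnt, u, d⟩ |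
      ⟨i, c, v, cnt, u, d⟩ | ⟨i, c, v, cnt, u, d⟩ | ⟨i, c, v, cnt⟩ | ⟨i, c, cnt⟩ | c |
      ⟨c, u, d⟩ | ⟨c, u, d⟩ | c
    -- F1 : level → scan
    · simp only [trans3, Inv, st] at ih hsem ⊢
      refine ⟨fun h => absurd h (by decide), fun _ => ?_, fun h => absurd h (by decide),
        fun h => absurd h (by decide), fun h => absurd h (by decide),
        fun h => absurd h (by decide)⟩
      have hc := ih.1 (by trivial)
      exact ⟨by simpa using i.isLt, hc, by simp [z0]⟩
    -- F2 : scan, count a member of R (i+1)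
    · simp only [trans3, Inv, st] at ih hsem ⊢
      refine ⟨fun h => absurd h (by decide), fun _ => ?_, fun h => absurd h (by decide),
        fun h => absurd h (by decide), fun h => absurd h (by decide),
        fun h => absurd h (by decide)⟩
      obtain ⟨h1, h2, h3⟩ := ih.2.1 (by trivial)
      have hv : v ∈ Rset B α (i.val + 1) := (sem_memb B (i.val + 1) v α).mp hsem
      refine ⟨h1, h2, ?_⟩
      simp only [Fin.val_succ, Fin.coe_castSucc] at h3 ⊢
      rw [filter_lt_succ_mem B hv]
      omega
    -- F3 : scan → nver
    · simp only [trans3, Inv, st] at ih hsem ⊢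
      refine ⟨fun h => absurd h (by decide), fun h => absurd h (by decide), fun _ => ?_,
        fun h => absurd h (by decide), fun h => absurd h (by decide),
        fun h => absurd h (by decide)⟩
      have hs := ih.2.1 (by trivial)
      refine ⟨hs, by simpa using v.isLt, ∅, by simp, by simp [z0], by simp⟩
    -- F4 : nver, skip u
    · simp only [trans3, Inv, st] at ih hsem ⊢
      refine ⟨fun h => absurd h (by decide), fun h => absurd h (by decide), fun _ => ?_,
        fun h => absurd h (by decide), fun h => absurd h (by decide),
        fun h => absurd h (by decide)⟩
      obtain ⟨hs, hv, T, hT1, hT2, hT3⟩ := ih.2.2.1 (by trivial)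
      refine ⟨hs, hv, T, hT1, hT2, fun w hw => ?_⟩
      obtain ⟨ha, hb, hc⟩ := hT3 w hw
      exact ⟨by simp only [Fin.val_succ]; simp only [Fin.coe_castSucc] at ha; omega, hb, hc⟩
    -- F5 : nver, take u (membership verified)
    · simp only [trans3, Inv, st] at ih hsem ⊢
      refine ⟨fun h => absurd h (by decide), fun h => absurd h (by decide),
        fun h => absurd h (by decide), fun _ => ?_, fun h => absurd h (by decide),
        fun h => absurd h (by decide)⟩
      rw [sem_ite] at hsem
      obtain ⟨huv, hmem⟩ := hsem
      rw [sem_memb] at hmem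
      have hnv := ih.2.2.1 (by trivial)
      refine ⟨hnv, by simpa using d.isLt, by simpa using u.isLt, ?_, ?_⟩
      · have : (⟨(u.castSucc).val, by simpa using u.isLt⟩ : Fin B.nv) = u := by
          ext; simp
        rw [this]; exact hmem
      · simp only [Fin.coe_castSucc]
        intro h
        exact huv (Fin.ext h)
    -- F6 : nver2 → nver, u checked
    · simp only [trans3, Inv, st] at ih hsem ⊢
      refine ⟨fun h => absurd h (by decide), fun h => absurd h (by decide), fun _ => ?_,
        fun h => absurd h (by decide), fun h => absurd h (by decide),
        fun h => absurd h (by decide)⟩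
      rw [sem_allFalseG] at hsem
      obtain ⟨⟨hs, hv, T, hT1, hT2, hT3⟩, hd, hu', humem, huv⟩ := ih.2.2.2.1 (by trivial)
      have hunotT : u ∉ T := by
        intro h
        have := (hT3 u h).1
        simp at this
      refine ⟨hs, hv, insert u T, ?_, ?_, ?_⟩
      · intro w hw
        rcases Finset.mem_insert.mp hw with rfl | hw'
        · exact humem
        · exact hT1 hw'
      · rw [Finset.card_insert_of_notMem hunotT, hT2]
        simp
      · intro w hw
        rcases Finset.mem_insert.mp hw with rfl | hw'
        · refine ⟨by simp, ?_, hsem⟩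
          intro h
          apply huv
          simpa using congrArg Fin.val h
        · obtain ⟨ha, hb, hc⟩ := hT3 w hw'
          refine ⟨?_, hb, hc⟩
          simp only [Fin.coe_castSucc] at ha
          simp only [Fin.val_succ]
          omega
    -- F7 : nver done → scan (v confirmed not in R (i+1))
    · simp only [trans3, Inv, st] at ih hsem ⊢
      refine ⟨fun h => absurd h (by decide), fun _ => ?_, fun h => absurd h (by decide),
        fun h => absurd h (by decide), fun h => absurd h (by decide),
        fun h => absurd h (by decide)⟩
      obtain ⟨⟨hi, hc, hcnt⟩, hv, T, hT1, hT2, hT3⟩ := ih.2.2.1 (by trivial)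
      have hvv : (⟨(v.castSucc).val, hv⟩ : Fin B.nv) = v := by ext; simp
      rw [hvv] at hT3
      have hTeq : T = Rset B α i.val := by
        apply Finset.eq_of_subset_of_card_le hT1
        rw [hT2, ← hc]
      have hvnot : v ∉ Rset B α (i.val + 1) := by
        intro hmem
        rw [Rset] at hmem
        rcases Finset.mem_union.mp hmem with h' | h'
        · exact (hT3 v (hTeq ▸ h')).2.1 rfl
        · simp only [Finset.mem_filter] at h'
          obtain ⟨w, hw, hstep⟩ := h'.2
          exact (hT3 w (hTeq ▸ hw)).2.2 hstep
      refine ⟨hi, hc, ?_⟩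
      simp only [Fin.val_succ, Fin.coe_castSucc] at hcnt ⊢
      rw [filter_lt_succ_not_mem B (vv := v.val) ?_]
      · exact hcnt
      · intro w hw hweq
        have hwv : w = v := Fin.ext hweq
        rw [hwv] at hw
        exact hvnot hw
    -- F8 : scan done → next level
    · simp only [trans3, Inv, st] at ih hsem ⊢
      refine ⟨fun _ => ?_, fun h => absurd h (by decide), fun h => absurd h (by decide),
        fun h => absurd h (by decide), fun h => absurd h (by decide),
        fun h => absurd h (by decide)⟩
      obtain ⟨hi, hc, hcnt⟩ := ih.2.1 (by trivial)
      show cnt.val = (Rset B α (i.succ).val).card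
      simp only [Fin.val_succ]
      rw [hcnt]
      congr 1
      simpa [lastS] using filter_lt_top B (Rset B α (i.val + 1))
    -- F9 : top level → final check
    · simp only [trans3, Inv, st] at ih hsem ⊢
      refine ⟨fun h => absurd h (by decide), fun h => absurd h (by decide),
        fun h => absurd h (by decide), fun h => absurd h (by decide), fun _ => ?_,
        fun h => absurd h (by decide)⟩
      have hc := ih.1 (by trivial)
      refine ⟨by simpa [lastS, LvlInv] using hc, ∅, by simp, by simp [z0], by simp⟩
    -- F10 : final check, skip u
    · simp only [trans3, Inv, st] at ih hsem ⊢
      refine ⟨fun h => absurd h (by decide), fun h => absurd h (by decide),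
        fun h => absurd h (by decide), fun h => absurd h (by decide), fun _ => ?_,
        fun h => absurd h (by decide)⟩
      obtain ⟨hc, T, hT1, hT2, hT3⟩ := ih.2.2.2.2.1 (by trivial)
      refine ⟨hc, T, hT1, hT2, fun w hw => ?_⟩
      obtain ⟨ha, hb⟩ := hT3 w hw
      exact ⟨by simp only [Fin.val_succ]; simp only [Fin.coe_castSucc] at ha; omega, hb⟩
    -- F11 : final check, take u
    · simp only [trans3, Inv, st] at ih hsem ⊢
      refine ⟨fun h => absurd h (by decide), fun h => absurd h (by decide),
        fun h => absurd h (by decide), fun h => absurd h (by decide), fun _ => ?_,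
        fun h => absurd h (by decide)⟩
      rw [sem_ite] at hsem
      obtain ⟨hut, hmem⟩ := hsem
      rw [sem_memb] at hmem
      obtain ⟨hc, T, hT1, hT2, hT3⟩ := ih.2.2.2.2.1 (by trivial)
      have hunotT : u ∉ T := by
        intro h
        have := (hT3 u h).1
        simp at this
      refine ⟨hc, insert u T, ?_, ?_, ?_⟩
      · intro w hw
        rcases Finset.mem_insert.mp hw with rfl | hw'
        · exact hmem
        · exact hT1 hw'
      · rw [Finset.card_insert_of_notMem hunotT, hT2]
        simp
      · intro w hw
        rcases Finset.mem_insert.mp hw with rfl | hw'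
        · exact ⟨by simp, hut⟩
        · obtain ⟨ha, hb⟩ := hT3 w hw'
          refine ⟨?_, hb⟩
          simp only [Fin.coe_castSucc] at ha
          simp only [Fin.val_succ]
          omega
    -- F12 : final check done → accept
    · simp only [trans3, Inv, st] at ih hsem ⊢
      refine ⟨fun h => absurd h (by decide), fun h => absurd h (by decide),
        fun h => absurd h (by decide), fun h => absurd h (by decide),
        fun h => absurd h (by decide), fun _ => ?_⟩
      obtain ⟨hc, T, hT1, hT2, hT3⟩ := ih.2.2.2.2.1 (by trivial)
      have hTeq : T = Rset B α B.nv := by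
        apply Finset.eq_of_subset_of_card_le hT1
        rw [hT2, ← hc]
      intro hmem
      exact (hT3 B.tgt (hTeq ▸ hmem)).2 rfl

lemma IS_sound (h : Relation.ReflTransGen (AStep B α) (startSt B) (acceptSt B)) :
    ¬ Sem B α := by
  have := (inv_sound B α _ h).2.2.2.2.2 rfl
  rw [sem_iff_tgt_mem]
  exact this

end
end NLP

namespace NLP
noncomputable section
open Classical Finset

variable {n : ℕ} (B : NBP n) (α : Fin n → Bool)

lemma astep_of (idx : ISι B) (hsem : Sem (trans3 B idx).2.2 α) :
    AStep B α (trans3 B idx).1 (trans3 B idx).2.1 := ⟨idx, rfl, rfl, hsem⟩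

/-- Number of elements of `Rset i` below `u`. -/
def dcard (i u : ℕ) : ℕ := ((Rset B α i).filter (fun w => w.val < u)).card

lemma dcard_le (i u : ℕ) : dcard B α i u ≤ B.nv := by
  have h1 := Finset.card_filter_le (Rset B α i) (fun w => w.val < u)
  have h2 := Rcard_le B α i
  unfold dcard
  omega

lemma dcard_lt (i : ℕ) {u : ℕ} {hu : u < B.nv} (h : (⟨u, hu⟩ : Fin B.nv) ∈ Rset B α i) :
    dcard B α i u < (Rset B α i).card := by
  apply Finset.card_lt_card
  rw [Finset.ssubset_iff_of_subset (Finset.filter_subset _ _)]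
  exact ⟨⟨u, hu⟩, h, by simp⟩

lemma dcard_zero (i : ℕ) : dcard B α i 0 = 0 := by simp [dcard]

lemma dcard_succ_mem (i : ℕ) {u : ℕ} {hu : u < B.nv}
    (h : (⟨u, hu⟩ : Fin B.nv) ∈ Rset B α i) :
    dcard B α i (u + 1) = dcard B α i u + 1 := by
  have := filter_lt_succ_mem B (s := Rset B α i) (v := ⟨u, hu⟩) h
  simpa [dcard] using this

lemma dcard_succ_not (i : ℕ) {u : ℕ} (hu : u < B.nv)
    (h : (⟨u, hu⟩ : Fin B.nv) ∉ Rset B α i) :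
    dcard B α i (u + 1) = dcard B α i u := by
  unfold dcard
  congr 1
  apply filter_lt_succ_not_mem
  intro w hw hweq
  apply h
  have : w = (⟨u, hu⟩ : Fin B.nv) := Fin.ext hweq
  rwa [this] at hw

lemma dcard_top (i : ℕ) : dcard B α i B.nv = (Rset B α i).card := by
  unfold dcard
  rw [filter_lt_top]

/-- The inner enumeration loop (families F4, F5, F6). -/
lemma nver_loop (i : Fin B.nv) (c cnt : Fin (B.nv+1)) (v : Fin B.nv)
    (hv : v ∉ Rset B α (i.val + 1)) :
    ∀ u, (hu : u ≤ B.nv) →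
      Relation.ReflTransGen (AStep B α)
        (st 2 i.castSucc c v.castSucc cnt (z0 B) (z0 B))
        (st 2 i.castSucc c v.castSucc cnt ⟨u, by omega⟩
          ⟨dcard B α i.val u, by have := dcard_le B α i.val u; omega⟩) := by
  intro u
  induction u with
  | zero =>
    intro _
    have hz : (⟨dcard B α i.val 0, by have := dcard_le B α i.val 0; omega⟩ :
        Fin (B.nv+1)) = z0 B := Fin.ext (by simp [dcard_zero, z0])
    rw [hz]
    exact Relation.ReflTransGen.refl
  | succ u ih =>
    intro hu
    have hu' : u < B.nv := hu
    have prev := ih (by omega)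
    by_cases hmem : (⟨u, hu'⟩ : Fin B.nv) ∈ Rset B α i.val
    · -- take u : F5 then F6
      have hdlt : dcard B α i.val u < B.nv := by
        have h1 := dcard_lt B α i.val hmem
        have h2 := Rcard_le B α i.val
        omega
      have s5 := astep_of B α (.inr (.inr (.inr (.inr (.inl (i, c, v, cnt, ⟨u, hu'⟩,
          ⟨dcard B α i.val u, hdlt⟩))))))
        (by
          simp only [trans3]
          rw [sem_ite]
          constructor
          · intro h
            rw [h] at hmem
            exact hv (Rset_subset_succ B α i.val hmem)
          · exact (sem_memb B i.val ⟨u, hu'⟩ α).mpr hmem)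
      simp only [trans3] at s5
      have hnostep : ¬ B.Step α ⟨u, hu'⟩ v := by
        intro hstep
        exact hv (mem_Rset_succ_of_step B α hmem hstep)
      have s6 := astep_of B α (.inr (.inr (.inr (.inr (.inr (.inl (i, c, v, cnt, ⟨u, hu'⟩,
          ⟨dcard B α i.val u, hdlt⟩)))))))
        (by
          simp only [trans3]
          exact (sem_allFalseG B ⟨u, hu'⟩ v α).mpr hnostep)
      simp only [trans3] at s6
      have e : (⟨dcard B α i.val (u + 1), by have := dcard_le B α i.val (u+1); omega⟩ :
          Fin (B.nv+1)) = (⟨dcard B α i.val u, hdlt⟩ : Fin B.nv).succ :=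
        Fin.ext (by simp [dcard_succ_mem B α i.val hmem])
      rw [e]
      exact (prev.tail s5).tail s6
    · -- skip u : F4
      have s4 := astep_of B α (.inr (.inr (.inr (.inl (i, c, v, cnt, ⟨u, hu'⟩,
          ⟨dcard B α i.val u, by have := dcard_le B α i.val u; omega⟩)))))
        (by simp only [trans3]; exact sem_trivTrue α)
      simp only [trans3] at s4
      have e : (⟨dcard B α i.val (u + 1), by have := dcard_le B α i.val (u+1); omega⟩ :
          Fin (B.nv+1)) = (⟨dcard B α i.val u, by
            have := dcard_le B α i.val u; omega⟩ : Fin (B.nv+1)) :=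
        Fin.ext (by simp [dcard_succ_not B α i.val hu' hmem])
      rw [e]
      exact prev.tail s4

end
end NLP

namespace NLP
noncomputable section
open Classical Finset

variable {n : ℕ} (B : NBP n) (α : Fin n → Bool)

/-- The scan loop over vertices at a given level (families F2, F3, F7 + inner loop). -/
lemma scan_loop (i : Fin B.nv) (c : Fin (B.nv+1)) (hc : c.val = (Rset B α i.val).card) :
    ∀ v, (hv : v ≤ B.nv) →
      Relation.ReflTransGen (AStep B α)
        (st 1 i.castSucc c (z0 B) (z0 B) (z0 B) (z0 B))
        (st 1 i.castSucc c ⟨v, by omega⟩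
          ⟨dcard B α (i.val + 1) v, by have := dcard_le B α (i.val+1) v; omega⟩
          (z0 B) (z0 B)) := by
  intro v
  induction v with
  | zero =>
    intro _
    have hz : (⟨dcard B α (i.val+1) 0, by have := dcard_le B α (i.val+1) 0; omega⟩ :
        Fin (B.nv+1)) = z0 B := Fin.ext (by simp [dcard_zero, z0])
    rw [hz]
    exact Relation.ReflTransGen.refl
  | succ v ih =>
    intro hv
    have hv' : v < B.nv := hv
    have prev := ih (by omega)
    by_cases hmem : (⟨v, hv'⟩ : Fin B.nv) ∈ Rset B α (i.val + 1)
    · -- F2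
      have hclt : dcard B α (i.val+1) v < B.nv := by
        have h1 := dcard_lt B α (i.val+1) hmem
        have h2 := Rcard_le B α (i.val+1)
        omega
      have s2 := astep_of B α (.inr (.inl (i, c, ⟨v, hv'⟩,
          ⟨dcard B α (i.val+1) v, hclt⟩)))
        (by
          simp only [trans3]
          exact (sem_memb B (i.val+1) ⟨v, hv'⟩ α).mpr hmem)
      simp only [trans3] at s2
      have e : (⟨dcard B α (i.val+1) (v + 1), by
          have := dcard_le B α (i.val+1) (v+1); omega⟩ : Fin (B.nv+1)) =
          (⟨dcard B α (i.val+1) v, hclt⟩ : Fin B.nv).succ :=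
        Fin.ext (by simp [dcard_succ_mem B α (i.val+1) hmem])
      rw [e]
      exact prev.tail s2
    · -- F3, inner loop, F7
      have s3 := astep_of B α (.inr (.inr (.inl (i, c, ⟨v, hv'⟩,
          ⟨dcard B α (i.val+1) v, by have := dcard_le B α (i.val+1) v; omega⟩))))
        (by simp only [trans3]; exact sem_trivTrue α)
      simp only [trans3] at s3
      have inner := nver_loop B α i c
        ⟨dcard B α (i.val+1) v, by have := dcard_le B α (i.val+1) v; omega⟩
        ⟨v, hv'⟩ hmem B.nv le_rfl
      have ec : (⟨dcard B α i.val B.nv, by have := dcard_le B α i.val B.nv; omega⟩ :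
          Fin (B.nv+1)) = c := Fin.ext (by simp [dcard_top, hc])
      rw [ec] at inner
      have s7 := astep_of B α (.inr (.inr (.inr (.inr (.inr (.inr (.inl (i, c, ⟨v, hv'⟩,
          ⟨dcard B α (i.val+1) v, by have := dcard_le B α (i.val+1) v; omega⟩))))))))
        (by simp only [trans3]; exact sem_trivTrue α)
      simp only [trans3] at s7
      have e : (⟨dcard B α (i.val+1) (v + 1), by
          have := dcard_le B α (i.val+1) (v+1); omega⟩ : Fin (B.nv+1)) =
          (⟨dcard B α (i.val+1) v, by
            have := dcard_le B α (i.val+1) v; omega⟩ : Fin (B.nv+1)) :=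
        Fin.ext (by simp [dcard_succ_not B α (i.val+1) hv' hmem])
      rw [e]
      exact (((prev.tail s3).trans inner).tail s7)

/-- The level loop (families F1, F8 + scan loop). -/
lemma level_loop :
    ∀ i, (hi : i ≤ B.nv) →
      Relation.ReflTransGen (AStep B α) (startSt B)
        (st 0 ⟨i, by omega⟩
          ⟨(Rset B α i).card, by have := Rcard_le B α i; omega⟩
          (z0 B) (z0 B) (z0 B) (z0 B)) := by
  intro i
  induction i with
  | zero =>
    intro _
    have hz : (⟨(Rset B α 0).card, by have := Rcard_le B α 0; omega⟩ :
        Fin (B.nv+1)) = oneC B := by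
      apply Fin.ext
      have : (Rset B α 0) = {B.src} := rfl
      simp [this, oneC]
    rw [hz]
    exact Relation.ReflTransGen.refl
  | succ i ih =>
    intro hi
    have hi' : i < B.nv := hi
    have prev := ih (by omega)
    have s1 := astep_of B α (.inl (⟨i, hi'⟩,
        ⟨(Rset B α i).card, by have := Rcard_le B α i; omega⟩))
      (by simp only [trans3]; exact sem_trivTrue α)
    simp only [trans3] at s1
    have scan := scan_loop B α ⟨i, hi'⟩
      ⟨(Rset B α i).card, by have := Rcard_le B α i; omega⟩ rfl B.nv le_rfl
    have s8 := astep_of B α (.inr (.inr (.inr (.inr (.inr (.inr (.inr (.inl (⟨i, hi'⟩,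
        ⟨(Rset B α i).card, by have := Rcard_le B α i; omega⟩,
        ⟨dcard B α (i + 1) B.nv, by have := dcard_le B α (i+1) B.nv; omega⟩)))))))))
      (by simp only [trans3]; exact sem_trivTrue α)
    simp only [trans3] at s8
    have e : (⟨(Rset B α (i+1)).card, by have := Rcard_le B α (i+1); omega⟩ :
        Fin (B.nv+1)) = (⟨dcard B α (i + 1) B.nv, by
          have := dcard_le B α (i+1) B.nv; omega⟩ : Fin (B.nv+1)) :=
      Fin.ext (by simp [dcard_top])
    rw [e]
    exact ((prev.tail s1).trans scan).tail s8

/-- The final verification loop (families F10, F11). -/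
lemma fin_loop (c : Fin (B.nv+1)) (htgt : B.tgt ∉ Rset B α B.nv) :
    ∀ u, (hu : u ≤ B.nv) →
      Relation.ReflTransGen (AStep B α)
        (st 4 (z0 B) c (z0 B) (z0 B) (z0 B) (z0 B))
        (st 4 (z0 B) c (z0 B) (z0 B) ⟨u, by omega⟩
          ⟨dcard B α B.nv u, by have := dcard_le B α B.nv u; omega⟩) := by
  intro u
  induction u with
  | zero =>
    intro _
    have hz : (⟨dcard B α B.nv 0, by have := dcard_le B α B.nv 0; omega⟩ :
        Fin (B.nv+1)) = z0 B := Fin.ext (by simp [dcard_zero, z0])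
    rw [hz]
    exact Relation.ReflTransGen.refl
  | succ u ih =>
    intro hu
    have hu' : u < B.nv := hu
    have prev := ih (by omega)
    by_cases hmem : (⟨u, hu'⟩ : Fin B.nv) ∈ Rset B α B.nv
    · -- F11
      have hdlt : dcard B α B.nv u < B.nv := by
        have h1 := dcard_lt B α B.nv hmem
        have h2 := Rcard_le B α B.nv
        omega
      have s11 := astep_of B α (.inr (.inr (.inr (.inr (.inr (.inr (.inr (.inr (.inr
          (.inr (.inl (c, ⟨u, hu'⟩, ⟨dcard B α B.nv u, hdlt⟩))))))))))))
        (by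
          simp only [trans3]
          rw [sem_ite]
          constructor
          · intro h
            rw [h] at hmem
            exact htgt hmem
          · exact (sem_memb B B.nv ⟨u, hu'⟩ α).mpr hmem)
      simp only [trans3] at s11
      have e : (⟨dcard B α B.nv (u + 1), by have := dcard_le B α B.nv (u+1); omega⟩ :
          Fin (B.nv+1)) = (⟨dcard B α B.nv u, hdlt⟩ : Fin B.nv).succ :=
        Fin.ext (by simp [dcard_succ_mem B α B.nv hmem])
      rw [e]
      exact prev.tail s11
    · -- F10
      have s10 := astep_of B α (.inr (.inr (.inr (.inr (.inr (.inr (.inr (.inr (.inr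
          (.inl (c, ⟨u, hu'⟩,
            ⟨dcard B α B.nv u, by have := dcard_le B α B.nv u; omega⟩)))))))))))
        (by simp only [trans3]; exact sem_trivTrue α)
      simp only [trans3] at s10
      have e : (⟨dcard B α B.nv (u + 1), by have := dcard_le B α B.nv (u+1); omega⟩ :
          Fin (B.nv+1)) = (⟨dcard B α B.nv u, by
            have := dcard_le B α B.nv u; omega⟩ : Fin (B.nv+1)) :=
        Fin.ext (by simp [dcard_succ_not B α B.nv hu' hmem])
      rw [e]
      exact prev.tail s10

lemma IS_complete (htgt : B.tgt ∉ Rset B α B.nv) :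
    Relation.ReflTransGen (AStep B α) (startSt B) (acceptSt B) := by
  set c : Fin (B.nv + 1) :=
    ⟨(Rset B α B.nv).card, by have := Rcard_le B α B.nv; omega⟩ with hcdef
  have lv := level_loop B α B.nv le_rfl
  have s9 := astep_of B α (.inr (.inr (.inr (.inr (.inr (.inr (.inr (.inr (.inl c)))))))))
    (by simp only [trans3]; exact sem_trivTrue α)
  simp only [trans3] at s9
  have fl := fin_loop B α c htgt B.nv le_rfl
  have ec : (⟨dcard B α B.nv B.nv, by have := dcard_le B α B.nv B.nv; omega⟩ :
      Fin (B.nv+1)) = c := Fin.ext (by simp [dcard_top, hcdef])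
  rw [ec] at fl
  have s12 := astep_of B α (.inr (.inr (.inr (.inr (.inr (.inr (.inr (.inr (.inr
      (.inr (.inr c)))))))))))
    (by simp only [trans3]; exact sem_trivTrue α)
  simp only [trans3] at s12
  exact (((lv.tail s9).trans fl).tail s12)

/-- The complementation theorem : the counting machine accepts exactly when B rejects. -/
theorem sem_ISmach (α : Fin n → Bool) : Sem (ISmach B) α ↔ ¬ Sem B α := by
  rw [sem_ISmach_iff]
  constructor
  · exact IS_sound B α
  · intro h
    apply IS_complete B α
    rw [sem_iff_tgt_mem] at h
    exact h

end
end NLP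

namespace NLP
noncomputable section
open Classical Finset

variable {n : ℕ} (B : NBP n)

lemma nv_ofSys (S : Type) [Fintype S] (A : S → S → Lab n → Prop) (s t : S) :
    (ofSys S A s t).nv = Fintype.card S := rfl

lemma nv_memb (j : ℕ) (v : Fin B.nv) : (memb B j v).nv = B.nv * (j + 1) := by
  rw [memb, nv_ofSys, Fintype.card_prod, Fintype.card_fin, Fintype.card_fin]

lemma nv_chainN (ls : List (Lab n)) : (chainN ls).nv = ls.length + 1 := by
  rw [chainN, nv_ofSys, Fintype.card_fin]

lemma nv_trivTrue : (trivTrue (n := n)).nv = 1 := by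
  rw [trivTrue, nv_chainN]
  simp

lemma nv_dead : (deadNBP (n := n)).nv = 2 := by
  rw [deadNBP, nv_ofSys, Fintype.card_fin]

lemma box_nv_le (i : ISι B) :
    (trans3 B i).2.2.nv ≤ B.nv * (B.nv + 1) + B.arcs.card + 2 := by
  have hm : ∀ j v, j ≤ B.nv → (memb B j v).nv ≤ B.nv * (B.nv + 1) := by
    intro j v hj
    rw [nv_memb]
    exact Nat.mul_le_mul_left _ (by omega)
  rcases i with ⟨i, c⟩ | ⟨i, c, v, cnt⟩ | ⟨i, c, v, cnt⟩ | ⟨i, c, v, cnt, u, d⟩ |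
      ⟨i, c, v, cnt, u, d⟩ | ⟨i, c, v, cnt, u, d⟩ | ⟨i, c, v, cnt⟩ | ⟨i, c, cnt⟩ | c |
      ⟨c, u, d⟩ | ⟨c, u, d⟩ | c <;>
    simp only [trans3]
  · rw [nv_trivTrue]; omega
  · have := hm (i.val + 1) v (by omega); omega
  · rw [nv_trivTrue]; omega
  · rw [nv_trivTrue]; omega
  · by_cases h : u ≠ v
    · rw [if_pos h]
      have := hm i.val u (by omega); omega
    · rw [if_neg h, nv_dead]; omega
  · rw [allFalseG, nv_chainN]
    have : (((B.arcs.filter (fun a => a.1 = u ∧ a.2.1 = v)).toList).map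
        (fun a => negLab a.2.2)).length ≤ B.arcs.card := by
      rw [List.length_map, Finset.length_toList]
      exact Finset.card_filter_le _ _
    omega
  · rw [nv_trivTrue]; omega
  · rw [nv_trivTrue]; omega
  · rw [nv_trivTrue]; omega
  · rw [nv_trivTrue]; omega
  · by_cases h : u ≠ B.tgt
    · rw [if_pos h]
      have := hm B.nv u le_rfl; omega
    · rw [if_neg h, nv_dead]; omega
  · rw [nv_trivTrue]; omega

lemma card_ISι_le : Fintype.card (ISι B) ≤ 12 * (B.nv + 1) ^ 6 := by
  set M := B.nv
  set P := B.nv + 1 with hP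
  have hMP : M ≤ P := by omega
  have h1P : 1 ≤ P := by omega
  have pow_le : ∀ k : ℕ, k ≤ 6 → P ^ k ≤ P ^ 6 :=
    fun k hk => Nat.pow_le_pow_right h1P hk
  have hI1 : Fintype.card (I1 B) ≤ P ^ 6 := by
    simp only [I1, Fintype.card_prod, Fintype.card_fin]
    calc M * P ≤ P * P := by gcongr
    _ = P ^ 2 := by ring
    _ ≤ P ^ 6 := pow_le 2 (by omega)
  have hI2 : Fintype.card (I2 B) ≤ P ^ 6 := by
    simp only [I2, Fintype.card_prod, Fintype.card_fin]
    calc M * (P * (M * M)) ≤ P * (P * (P * P)) := by gcongr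
    _ = P ^ 4 := by ring
    _ ≤ P ^ 6 := pow_le 4 (by omega)
  have hI3 : Fintype.card (I3 B) ≤ P ^ 6 := by
    simp only [I3, Fintype.card_prod, Fintype.card_fin]
    calc M * (P * (M * P)) ≤ P * (P * (P * P)) := by gcongr
    _ = P ^ 4 := by ring
    _ ≤ P ^ 6 := pow_le 4 (by omega)
  have hI4 : Fintype.card (I4 B) ≤ P ^ 6 := by
    simp only [I4, Fintype.card_prod, Fintype.card_fin]
    calc M * (P * (M * (P * (M * P)))) ≤ P * (P * (P * (P * (P * P)))) := by gcongr
    _ = P ^ 6 := by ring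
  have hI5 : Fintype.card (I5 B) ≤ P ^ 6 := by
    simp only [I5, Fintype.card_prod, Fintype.card_fin]
    calc M * (P * (M * (P * (M * M)))) ≤ P * (P * (P * (P * (P * P)))) := by gcongr
    _ = P ^ 6 := by ring
  have hI8 : Fintype.card (I8 B) ≤ P ^ 6 := by
    simp only [I8, Fintype.card_prod, Fintype.card_fin]
    calc M * (P * P) ≤ P * (P * P) := by gcongr
    _ = P ^ 3 := by ring
    _ ≤ P ^ 6 := pow_le 3 (by omega)
  have hI9 : Fintype.card (I9 B) ≤ P ^ 6 := by
    simp only [I9, Fintype.card_fin]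
    calc P = P ^ 1 := by ring
    _ ≤ P ^ 6 := pow_le 1 (by omega)
  have hI10 : Fintype.card (I10 B) ≤ P ^ 6 := by
    simp only [I10, Fintype.card_prod, Fintype.card_fin]
    calc P * (M * P) ≤ P * (P * P) := by gcongr
    _ = P ^ 3 := by ring
    _ ≤ P ^ 6 := pow_le 3 (by omega)
  have hI11 : Fintype.card (I11 B) ≤ P ^ 6 := by
    simp only [I11, Fintype.card_prod, Fintype.card_fin]
    calc P * (M * M) ≤ P * (P * P) := by gcongr
    _ = P ^ 3 := by ring
    _ ≤ P ^ 6 := pow_le 3 (by omega)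
  have : Fintype.card (ISι B) = Fintype.card (I1 B) + (Fintype.card (I2 B) +
      (Fintype.card (I3 B) + (Fintype.card (I4 B) + (Fintype.card (I5 B) +
      (Fintype.card (I5 B) + (Fintype.card (I3 B) + (Fintype.card (I8 B) +
      (Fintype.card (I9 B) + (Fintype.card (I10 B) + (Fintype.card (I11 B) +
      Fintype.card (I9 B))))))))))) := by
    simp only [ISι, Fintype.card_sum]
  rw [this]
  omega

lemma card_Ph (M : ℕ) : Fintype.card (Ph M) = 6 * (M + 1) ^ 6 := by
  simp only [Ph, Fintype.card_prod, Fintype.card_fin]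
  ring

lemma size_ISmach_le : (ISmach B).size ≤ 400 * (B.size + 2) ^ 16 * (2 + 2 * n) := by
  set s := B.size with hs
  have hM : B.nv ≤ s := Nat.le_add_right _ _
  have hA : B.arcs.card ≤ s := Nat.le_add_left _ _
  have h0 := size_assemble_le (fun i => (trans3 B i).1) (fun i => (trans3 B i).2.1)
    (fun i => (trans3 B i).2.2) (startSt B) (acceptSt B)
  rw [show assemble (fun i => (trans3 B i).1) (fun i => (trans3 B i).2.1)
    (fun i => (trans3 B i).2.2) (startSt B) (acceptSt B) = ISmach B from rfl] at h0
  set K := B.nv * (B.nv + 1) + B.arcs.card + 2 with hK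
  have hsum : (∑ i : ISι B, (trans3 B i).2.2.nv) ≤ Fintype.card (ISι B) * K := by
    calc (∑ i : ISι B, (trans3 B i).2.2.nv) ≤ ∑ _i : ISι B, K :=
      Finset.sum_le_sum (fun i _ => box_nv_le B i)
    _ = Fintype.card (ISι B) * K := by
      rw [Finset.sum_const, smul_eq_mul, Finset.card_univ]
  have hKs : K ≤ (s + 2) ^ 2 := by nlinarith
  have hP6 : (B.nv + 1) ^ 6 ≤ (s + 2) ^ 6 := Nat.pow_le_pow_left (by omega) 6
  have hcard := card_ISι_le B
  have hN : Fintype.card (Ph B.nv) + (∑ i : ISι B, (trans3 B i).2.2.nv) + 1 ≤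
      19 * (s + 2) ^ 8 := by
    have e1 : Fintype.card (Ph B.nv) ≤ 6 * (s + 2) ^ 6 := by
      rw [card_Ph]; omega
    have e2 : (∑ i : ISι B, (trans3 B i).2.2.nv) ≤ 12 * (s + 2) ^ 8 := by
      calc (∑ i : ISι B, (trans3 B i).2.2.nv) ≤ Fintype.card (ISι B) * K := hsum
      _ ≤ (12 * (B.nv + 1) ^ 6) * ((s + 2) ^ 2) := Nat.mul_le_mul hcard hKs
      _ ≤ (12 * (s + 2) ^ 6) * ((s + 2) ^ 2) := by
          have := hP6
          nlinarith
      _ = 12 * (s + 2) ^ 8 := by ring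
    have e3 : (1 : ℕ) ≤ (s + 2) ^ 6 := Nat.one_le_pow _ _ (by omega)
    have e4 : (s + 2) ^ 6 ≤ (s + 2) ^ 8 := Nat.pow_le_pow_right (by omega) (by omega)
    omega
  calc (ISmach B).size ≤
      (Fintype.card (Ph B.nv) + (∑ i : ISι B, (trans3 B i).2.2.nv) + 1) ^ 2 *
        (2 + 2 * n) := h0
    _ ≤ (19 * (s + 2) ^ 8) ^ 2 * (2 + 2 * n) := by
        apply Nat.mul_le_mul_right
        exact Nat.pow_le_pow_left hN 2
    _ ≤ 400 * (s + 2) ^ 16 * (2 + 2 * n) := by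
        apply Nat.mul_le_mul_right
        calc (19 * (s + 2) ^ 8) ^ 2 = 361 * ((s + 2) ^ 8) ^ 2 := by ring
        _ = 361 * (s + 2) ^ 16 := by rw [← pow_mul]
        _ ≤ 400 * (s + 2) ^ 16 := by
            apply Nat.mul_le_mul_right
            omega

/-- Nonuniform Immerman–Szelepcsényi: NBPs can be complemented in polynomial size. -/
theorem exists_complement : ∃ B' : NBP n,
    B'.size ≤ 400 * (B.size + 2) ^ 16 * (2 + 2 * n) ∧
    ∀ α, Sem B' α ↔ ¬ Sem B α :=
  ⟨ISmach B, size_ISmach_le B, fun α => sem_ISmach B α⟩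

end
end NLP

namespace NLP
noncomputable section
open Classical Finset

section TwoSat

variable {L : Type} [Fintype L] (Arr : L → L → Prop)

def AncS (l : L) : Finset L :=
  Finset.univ.filter (fun x => Relation.ReflTransGen Arr x l)

def SCCs (l : L) : Finset L :=
  Finset.univ.filter (fun x => Relation.ReflTransGen Arr l x ∧ Relation.ReflTransGen Arr x l)

def encL (l : L) : ℕ := (Fintype.equivFin L l).val

lemma encL_inj : Function.Injective (encL (L := L)) := by
  intro a b h
  have := Fin.ext (a := Fintype.equivFin L a) (b := Fintype.equivFin L b) h
  simpa using (Fintype.equivFin L).injective this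

lemma mem_SCCs_self (l : L) : l ∈ SCCs Arr l := by
  simp only [SCCs, Finset.mem_filter, Finset.mem_univ, true_and]
  exact ⟨Relation.ReflTransGen.refl, Relation.ReflTransGen.refl⟩

def gMin (l : L) : ℕ := ((SCCs Arr l).image (encL)).min'
  (Finset.Nonempty.image ⟨l, mem_SCCs_self Arr l⟩ _)

lemma gMin_exists (l : L) : ∃ x ∈ SCCs Arr l, encL x = gMin Arr l := by
  have := Finset.min'_mem ((SCCs Arr l).image (encL))
    (Finset.Nonempty.image ⟨l, mem_SCCs_self Arr l⟩ _)
  rw [Finset.mem_image] at this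
  obtain ⟨x, hx, he⟩ := this
  exact ⟨x, hx, he⟩

lemma gMin_le (l : L) : gMin Arr l ≤ Fintype.card L := by
  obtain ⟨x, _, he⟩ := gMin_exists Arr l
  rw [← he]
  exact le_of_lt (Fin.isLt _)

lemma SCCs_eq_of_mutual {a b : L} (hab : Relation.ReflTransGen Arr a b)
    (hba : Relation.ReflTransGen Arr b a) : SCCs Arr a = SCCs Arr b := by
  ext x
  simp only [SCCs, Finset.mem_filter, Finset.mem_univ, true_and]
  exact ⟨fun ⟨h1, h2⟩ => ⟨hba.trans h1, h2.trans hab⟩,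
    fun ⟨h1, h2⟩ => ⟨hab.trans h1, h2.trans hba⟩⟩

lemma gMin_eq_iff_mutual {a b : L} (h : gMin Arr a = gMin Arr b) :
    Relation.ReflTransGen Arr a b ∧ Relation.ReflTransGen Arr b a := by
  obtain ⟨x, hx, hex⟩ := gMin_exists Arr a
  obtain ⟨y, hy, hey⟩ := gMin_exists Arr b
  have : x = y := encL_inj (by rw [hex, hey, h])
  subst this
  simp only [SCCs, Finset.mem_filter, Finset.mem_univ, true_and] at hx hy
  exact ⟨hx.1.trans hy.2, hy.1.trans hx.2⟩

lemma anc_mono {a b : L} (h : Relation.ReflTransGen Arr a b) : AncS Arr a ⊆ AncS Arr b := by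
  intro x hx
  simp only [AncS, Finset.mem_filter, Finset.mem_univ, true_and] at hx ⊢
  exact hx.trans h

lemma mutual_of_anc_card {a b : L} (h : Relation.ReflTransGen Arr a b)
    (hc : (AncS Arr a).card = (AncS Arr b).card) : Relation.ReflTransGen Arr b a := by
  have heq : AncS Arr a = AncS Arr b :=
    Finset.eq_of_subset_of_card_le (anc_mono Arr h) (le_of_eq hc.symm)
  have : b ∈ AncS Arr b := by
    simp only [AncS, Finset.mem_filter, Finset.mem_univ, true_and]
    exact Relation.ReflTransGen.refl
  rw [← heq] at this
  simp only [AncS, Finset.mem_filter, Finset.mem_univ, true_and] at this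
  exact this

/-- Rank function separating strongly connected components, monotone along arcs. -/
def Fv (l : L) : ℕ := (AncS Arr l).card * (Fintype.card L + 1) + gMin Arr l

lemma Fv_mono {a b : L} (h : Relation.ReflTransGen Arr a b) : Fv Arr a ≤ Fv Arr b := by
  have hsub := anc_mono Arr h
  have hcard := Finset.card_le_card hsub
  rcases Nat.lt_or_ge (AncS Arr a).card (AncS Arr b).card with hlt | hge
  · have h1 := gMin_le Arr a
    have h2 := gMin_le Arr b
    have key : (AncS Arr a).card * (Fintype.card L + 1) + (Fintype.card L + 1) ≤
        (AncS Arr b).card * (Fintype.card L + 1) := by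
      have h3 : (AncS Arr a).card + 1 ≤ (AncS Arr b).card := hlt
      calc (AncS Arr a).card * (Fintype.card L + 1) + (Fintype.card L + 1) =
          ((AncS Arr a).card + 1) * (Fintype.card L + 1) := by ring
      _ ≤ (AncS Arr b).card * (Fintype.card L + 1) :=
        Nat.mul_le_mul_right _ h3
    unfold Fv
    linarith [key, h1]
  · have heq : (AncS Arr a).card = (AncS Arr b).card := le_antisymm hcard hge
    have hmut := mutual_of_anc_card Arr h heq
    have : gMin Arr a = gMin Arr b := by
      unfold gMin
      congr 1
      rw [SCCs_eq_of_mutual Arr h hmut]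
    unfold Fv
    rw [heq, this]

lemma mutual_of_Fv_eq {a b : L} (h : Fv Arr a = Fv Arr b) :
    Relation.ReflTransGen Arr a b ∧ Relation.ReflTransGen Arr b a := by
  apply gMin_eq_iff_mutual
  have h1 := gMin_le Arr a
  have h2 := gMin_le Arr b
  unfold Fv at h
  have e1 : gMin Arr a = ((AncS Arr a).card * (Fintype.card L + 1) + gMin Arr a) %
      (Fintype.card L + 1) := by
    rw [Nat.mul_comm, Nat.mul_add_mod, Nat.mod_eq_of_lt (by omega)]
  have e2 : gMin Arr b = ((AncS Arr b).card * (Fintype.card L + 1) + gMin Arr b) %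
      (Fintype.card L + 1) := by
    rw [Nat.mul_comm, Nat.mul_add_mod, Nat.mod_eq_of_lt (by omega)]
  rw [e1, e2, h]

variable (neg : L → L)

/-- The canonical 2-SAT assignment from the absence of contradictory cycles. -/
def valL (l : L) : Prop := Fv Arr (neg l) < Fv Arr l

theorem twoSat_assign (hneg : ∀ l, neg (neg l) = l)
    (hdual : ∀ a b, Arr a b → Arr (neg b) (neg a))
    (hnb : ∀ l, ¬ (Relation.ReflTransGen Arr l (neg l) ∧
      Relation.ReflTransGen Arr (neg l) l)) :
    (∀ l, valL Arr neg (neg l) ↔ ¬ valL Arr neg l) ∧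
    (∀ a b, Arr a b → valL Arr neg a → valL Arr neg b) := by
  have hne : ∀ l : L, Fv Arr l ≠ Fv Arr (neg l) := by
    intro l h
    obtain ⟨h1, h2⟩ := mutual_of_Fv_eq Arr h
    exact hnb l ⟨h1, h2⟩
  constructor
  · intro l
    unfold valL
    rw [hneg]
    have := hne l
    omega
  · intro a b hab hva
    unfold valL at hva ⊢
    have h1 : Fv Arr a ≤ Fv Arr b := Fv_mono Arr (Relation.ReflTransGen.single hab)
    have h2 : Fv Arr (neg b) ≤ Fv Arr (neg a) :=
      Fv_mono Arr (Relation.ReflTransGen.single (hdual a b hab))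
    omega

theorem twoSat_unsat (σ : L → Prop) (hcons : ∀ l, σ (neg l) ↔ ¬ σ l)
    (himp : ∀ a b, Arr a b → σ a → σ b) :
    ∀ l, ¬ (Relation.ReflTransGen Arr l (neg l) ∧
      Relation.ReflTransGen Arr (neg l) l) := by
  have hstar : ∀ a b, Relation.ReflTransGen Arr a b → σ a → σ b := by
    intro a b h
    induction h with
    | refl => exact id
    | tail _ hstep ih => exact fun ha => himp _ _ hstep (ih ha)
  intro l ⟨h1, h2⟩
  by_cases hl : σ l
  · exact (hcons l).mp (hstar _ _ h1 hl) hl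
  · have : σ (neg l) := (hcons l).mpr hl
    exact hl (hstar _ _ h2 this)

end TwoSat
end
end NLP

namespace NLP
noncomputable section
open Classical Finset

variable {n : ℕ} (P : HGP n)

/-- The hyperedges of an HGP as a type. -/
abbrev EIdx := {e : Finset (Fin P.nv) // e ∈ P.edges}

abbrev LitT := EIdx P × Bool

def negT : LitT P → LitT P := fun x => (x.1, !x.2)

lemma negT_invol (x : LitT P) : negT P (negT P x) = x := by
  simp [negT]

/-- Acceptance condition of an HGP (the right-hand side of `HGP.Computes`). -/
def Accepts (α : Fin n → Bool) : Prop :=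
  ∃ S ⊆ P.edges, ((S : Set (Finset (Fin P.nv))).Pairwise fun e f => Disjoint e f) ∧
    ∀ v : Fin P.nv, litEval α (P.label v) = false → ∃ e ∈ S, v ∈ e

/-- Implication graph of the associated 2-SAT instance. -/
def ArrP (α : Fin n → Bool) (x y : LitT P) : Prop :=
  (x.2 = true ∧ y.2 = false ∧ x.1 ≠ y.1 ∧ ∃ v, v ∈ x.1.1 ∧ v ∈ y.1.1) ∨
  (x.2 = false ∧ y.2 = true ∧ ∃ v, v ∈ x.1.1 ∧ v ∈ y.1.1 ∧
    litEval α (P.label v) = false ∧ (x.1 ≠ y.1 ∨ ∀ f : EIdx P, v ∈ f.1 → f = x.1))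

lemma arrP_dual (α : Fin n → Bool) (a b : LitT P) (h : ArrP P α a b) :
    ArrP P α (negT P b) (negT P a) := by
  obtain ⟨a1, a2⟩ := a
  obtain ⟨b1, b2⟩ := b
  rcases h with ⟨h1, h2, h3, v, hv1, hv2⟩ | ⟨h1, h2, v, hv1, hv2, hv3, hv4⟩
  · simp only at h1 h2; subst h1; subst h2
    left
    exact ⟨rfl, rfl, fun h => h3 h.symm, v, hv2, hv1⟩
  · simp only at h1 h2; subst h1; subst h2
    right
    refine ⟨rfl, rfl, v, hv2, hv1, hv3, ?_⟩
    rcases hv4 with h | h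
    · exact Or.inl (fun he => h he.symm)
    · right
      intro f hf
      rw [h f hf]
      exact (h b1 hv2).symm

/-- A vertex of the hypergraph of degree ≤ 2 lying in two distinct hyperedges lies in
exactly those two. -/
lemma edges_of_mem (hdeg : P.degLE 2) {v : Fin P.nv} {e f g : Finset (Fin P.nv)}
    (he : e ∈ P.edges) (hf : f ∈ P.edges) (hg : g ∈ P.edges)
    (hef : e ≠ f) (hve : v ∈ e) (hvf : v ∈ f) (hvg : v ∈ g) : g = e ∨ g = f := by
  have hsub : ({e, f} : Finset (Finset (Fin P.nv))) ⊆ P.edges.filter (fun x => v ∈ x) := by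
    intro x hx
    rcases Finset.mem_insert.mp hx with rfl | hx
    · exact Finset.mem_filter.mpr ⟨he, hve⟩
    · rw [Finset.mem_singleton] at hx
      subst hx
      exact Finset.mem_filter.mpr ⟨hf, hvf⟩
  have hcard : ({e, f} : Finset (Finset (Fin P.nv))).card = 2 := by
    rw [Finset.card_insert_of_notMem (by simpa using hef), Finset.card_singleton]
  have heq : P.edges.filter (fun x => v ∈ x) = ({e, f} : Finset (Finset (Fin P.nv))) :=
    (Finset.eq_of_subset_of_card_le hsub (by rw [hcard]; exact hdeg v)).symm
  have : g ∈ P.edges.filter (fun x => v ∈ x) := Finset.mem_filter.mpr ⟨hg, hvg⟩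
  rw [heq] at this
  simpa using this

/-- Acceptance of a degree-2 HGP is satisfiability of the associated 2-SAT instance. -/
lemma accepts_iff_sat (hdeg : P.degLE 2) (α : Fin n → Bool) :
    Accepts P α ↔
      (∀ v : Fin P.nv, litEval α (P.label v) = false → ∃ e ∈ P.edges, v ∈ e) ∧
      (∃ σ : EIdx P → Bool, ∀ a b : LitT P, ArrP P α a b →
        (σ a.1 = a.2) → (σ b.1 = b.2)) := by
  constructor
  · rintro ⟨S, hSsub, hSdisj, hScov⟩
    constructor
    · intro v hv
      obtain ⟨e, heS, hve⟩ := hScov v hv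
      exact ⟨e, hSsub heS, hve⟩
    · refine ⟨fun e => decide (e.1 ∈ S), ?_⟩
      rintro ⟨e, be⟩ ⟨f, bf⟩ harc hval
      simp only [decide_eq_true_eq] at hval ⊢
      rcases harc with ⟨h1, h2, h3, v, hv1, hv2⟩ | ⟨h1, h2, v, hv1, hv2, hv3, hv4⟩
      · simp only at h1 h2 hval ⊢
        subst h1; subst h2
        simp only [decide_eq_true_eq] at hval ⊢
        rw [decide_eq_false_iff_not]
        intro hfS
        have hne : e.1 ≠ f.1 := fun hh => h3 (Subtype.ext hh)
        have hdis := hSdisj hval hfS hne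
        exact Finset.not_disjoint_iff.mpr ⟨v, hv1, hv2⟩ hdis
      · simp only at h1 h2 hval ⊢
        subst h1; subst h2
        simp only [decide_eq_false_iff_not, decide_eq_true_eq] at hval ⊢
        obtain ⟨g, hgS, hvg⟩ := hScov v hv3
        rcases hv4 with hne | huniq
        · have := edges_of_mem P hdeg e.2 f.2 (hSsub hgS)
            (fun hh => hne (Subtype.ext hh)) hv1 hv2 hvg
          rcases this with rfl | rfl
          · exact absurd hgS hval
          · exact hgS
        · have : (⟨g, hSsub hgS⟩ : EIdx P) = e := huniq ⟨g, hSsub hgS⟩ hvg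
          have hgE : g = e.1 := congrArg Subtype.val this
          rw [hgE] at hgS
          exact absurd hgS hval
  · rintro ⟨hside, σ, himp⟩
    refine ⟨P.edges.filter (fun e => ∃ h : e ∈ P.edges, σ ⟨e, h⟩ = true), 
      Finset.filter_subset _ _, ?_, ?_⟩
    · intro e heS f hfS hef
      rw [Finset.coe_filter, Set.mem_setOf_eq] at heS hfS
      obtain ⟨heP', hσe'⟩ := heS.2
      obtain ⟨hfP', hσf'⟩ := hfS.2
      rw [Finset.disjoint_left]
      intro v hve hvf
      have harc : ArrP P α (⟨e, heS.1⟩, true) (⟨f, hfS.1⟩, false) :=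
        Or.inl ⟨rfl, rfl, fun hh => hef (congrArg Subtype.val hh), v, hve, hvf⟩
      have := himp _ _ harc hσe'
      simp only at this
      rw [this] at hσf'
      exact Bool.false_ne_true hσf'
    · intro v hv
      obtain ⟨e, heP, hve⟩ := hside v hv
      by_cases hσe : σ ⟨e, heP⟩ = true
      · exact ⟨e, Finset.mem_filter.mpr ⟨heP, heP, hσe⟩, hve⟩
      · have hσe' : σ ⟨e, heP⟩ = false := by
          cases h : σ ⟨e, heP⟩
          · rfl
          · exact absurd h hσe
        by_cases hex : ∃ f : EIdx P, v ∈ f.1 ∧ f ≠ ⟨e, heP⟩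
        · obtain ⟨f, hvf, hfe⟩ := hex
          have harc : ArrP P α (⟨e, heP⟩, false) (f, true) :=
            Or.inr ⟨rfl, rfl, v, hve, hvf, hv, Or.inl (fun hh => hfe hh.symm)⟩
          have := himp _ _ harc hσe'
          simp only at this
          exact ⟨f.1, Finset.mem_filter.mpr ⟨f.2, f.2, by simpa using this⟩, hvf⟩
        · push_neg at hex
          have harc : ArrP P α (⟨e, heP⟩, false) (⟨e, heP⟩, true) :=
            Or.inr ⟨rfl, rfl, v, hve, hve, hv, Or.inr (fun f hf => by
              by_contra hne
              exact absurd (hex f hf) (fun hh => hne hh) )⟩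
          have := himp _ _ harc hσe'
          simp only at this
          rw [this] at hσe'
          exact absurd hσe' (by simp)

/-- Rejection of a degree-2 HGP in terms of the implication graph. -/
lemma reject_iff (hdeg : P.degLE 2) (α : Fin n → Bool) :
    ¬ Accepts P α ↔
      (∃ v : Fin P.nv, litEval α (P.label v) = false ∧ ∀ e ∈ P.edges, v ∉ e) ∨
      (∃ x : EIdx P, Relation.ReflTransGen (ArrP P α) (x, true) (x, false) ∧
        Relation.ReflTransGen (ArrP P α) (x, false) (x, true)) := by
  rw [accepts_iff_sat P hdeg]
  constructor
  · intro h
    by_cases hside : ∀ v : Fin P.nv, litEval α (P.label v) = false → ∃ e ∈ P.edges, v ∈ e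
    · right
      by_contra hnb
      push_neg at hnb
      apply h
      refine ⟨hside, ?_⟩
      have hnb' : ∀ l : LitT P, ¬ (Relation.ReflTransGen (ArrP P α) l (negT P l) ∧
          Relation.ReflTransGen (ArrP P α) (negT P l) l) := by
        rintro ⟨x, b⟩ ⟨h1, h2⟩
        cases b
        · exact hnb x (by simpa [negT] using h2) (by simpa [negT] using h1)
        · exact hnb x (by simpa [negT] using h1) (by simpa [negT] using h2)
      obtain ⟨hcons, himp⟩ := twoSat_assign (ArrP P α) (negT P) (negT_invol P)
        (arrP_dual P α) hnb'
      refine ⟨fun e => decide (valL (ArrP P α) (negT P) (e, true)), ?_⟩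
      have hval : ∀ x : LitT P,
          (decide (valL (ArrP P α) (negT P) (x.1, true)) = x.2) ↔
            valL (ArrP P α) (negT P) x := by
        rintro ⟨e, b⟩
        cases b
        · simp only [decide_eq_false_iff_not]
          constructor
          · intro hh
            have := (hcons (e, true)).mpr hh
            simpa [negT] using this
          · intro hh hcontra
            have := (hcons (e, true)).mp (by simpa [negT] using hh)
            exact this hcontra
        · simp
      intro a b harc ha
      rw [hval] at ha ⊢
      exact himp a b harc ha
    · left
      push_neg at hside
      obtain ⟨v, hv1, hv2⟩ := hside
      exact ⟨v, hv1, fun e he hve => hv2 e he hve⟩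
  · rintro (⟨v, hv1, hv2⟩ | ⟨x, h1, h2⟩) ⟨hside, σ, himp⟩
    · obtain ⟨e, he, hve⟩ := hside v hv1
      exact hv2 e he hve
    · have := twoSat_unsat (ArrP P α) (negT P)
        (σ := fun l => σ l.1 = l.2) ?_ himp (x, true)
      · apply this
        constructor
        · simpa [negT] using h1
        · simpa [negT] using h2
      · rintro ⟨e, b⟩
        cases b <;> simp [negT]

end
end NLP

namespace NLP
noncomputable section
open Classical Finset

variable {n : ℕ} (P : HGP n)

/-- Labelled implication arcs (independent of the input). -/
def ArrLab : LitT P → LitT P → Lab n → Prop := fun x y l =>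
  (x.2 = true ∧ y.2 = false ∧ x.1 ≠ y.1 ∧ (∃ v, v ∈ x.1.1 ∧ v ∈ y.1.1) ∧ l = .inl true) ∨
  (x.2 = false ∧ y.2 = true ∧ ∃ v, v ∈ x.1.1 ∧ v ∈ y.1.1 ∧
    (x.1 ≠ y.1 ∨ ∀ f : EIdx P, v ∈ f.1 → f = x.1) ∧ l = negLab (P.label v))

lemma arrLab_iff (α : Fin n → Bool) (x y : LitT P) :
    (∃ l, ArrLab P x y l ∧ litEval α l = true) ↔ ArrP P α x y := by
  constructor
  · rintro ⟨l, harc, hev⟩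
    rcases harc with ⟨h1, h2, h3, ⟨v, hv1, hv2⟩, hl⟩ | ⟨h1, h2, v, hv1, hv2, hcond, hl⟩
    · exact Or.inl ⟨h1, h2, h3, v, hv1, hv2⟩
    · refine Or.inr ⟨h1, h2, v, hv1, hv2, ?_, hcond⟩
      subst hl
      rw [litEval_negLab] at hev
      simpa using hev
  · rintro (⟨h1, h2, h3, v, hv1, hv2⟩ | ⟨h1, h2, v, hv1, hv2, hfalse, hcond⟩)
    · exact ⟨.inl true, Or.inl ⟨h1, h2, h3, ⟨v, hv1, hv2⟩, rfl⟩, rfl⟩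
    · refine ⟨negLab (P.label v), Or.inr ⟨h1, h2, v, hv1, hv2, hcond, rfl⟩, ?_⟩
      rw [litEval_negLab, hfalse]
      rfl

/-- Spine of the cycle-detecting NBP. -/
abbrev DQ := Bool ⊕ (EIdx P × LitT P × Bool)

def DA : DQ P → DQ P → Lab n → Prop
  | .inl s, .inl t, l => s = false ∧ t = true ∧
      ∃ v : Fin P.nv, (∀ e ∈ P.edges, v ∉ e) ∧ l = negLab (P.label v)
  | .inl s, .inr q, l => s = false ∧ q.2.1 = (q.1, true) ∧ q.2.2 = false ∧ l = .inl true
  | .inr q, .inl t, l => t = true ∧ q.2.1 = (q.1, true) ∧ q.2.2 = true ∧ l = .inl true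
  | .inr q, .inr q', l => q'.1 = q.1 ∧
      ((q'.2.2 = q.2.2 ∧ ArrLab P q.2.1 q'.2.1 l) ∨
       (q.2.1 = (q.1, false) ∧ q'.2.1 = (q.1, false) ∧ q.2.2 = false ∧ q'.2.2 = true ∧
        l = .inl true))

/-- The NBP detecting rejection of the HGP. -/
def Dnbp : NBP n := ofSys (DQ P) (DA P) (.inl false) (.inl true)

lemma sem_Dnbp (hdeg : P.degLE 2) (α : Fin n → Bool) :
    Sem (Dnbp P) α ↔ ¬ Accepts P α := by
  rw [Dnbp, sem_ofSys, reject_iff P hdeg α]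
  set cstep := fun q q' : DQ P => ∃ l, DA P q q' l ∧ litEval α l = true with hcstep
  constructor
  · intro h
    have key : ∀ q, Relation.ReflTransGen cstep (Sum.inl false) q →
        (∀ b, q = Sum.inl b → b = true →
          ((∃ v : Fin P.nv, litEval α (P.label v) = false ∧ ∀ e ∈ P.edges, v ∉ e) ∨
           (∃ x : EIdx P, Relation.ReflTransGen (ArrP P α) (x, true) (x, false) ∧
             Relation.ReflTransGen (ArrP P α) (x, false) (x, true)))) ∧
        (∀ (x : EIdx P) (cur : LitT P) (ph : Bool), q = Sum.inr (x, cur, ph) →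
          (ph = false → Relation.ReflTransGen (ArrP P α) (x, true) cur) ∧
          (ph = true → Relation.ReflTransGen (ArrP P α) (x, true) (x, false) ∧
            Relation.ReflTransGen (ArrP P α) (x, false) cur)) := by
      intro q hq
      induction hq with
      | refl =>
        constructor
        · intro b hb
          injection hb with hb'
          subst hb'
          intro hcontra
          exact absurd hcontra (by simp)
        · intro x cur ph hx
          exact absurd hx (by simp)
      | @tail y z hyz hstep ih =>
        obtain ⟨l, hda, hev⟩ := hstep
        constructor
        · intro b hb
          subst hb
          intro hbt
          subst hbt
          cases y with
          | inl s =>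
            obtain ⟨hs, ht, v, hnoc, hl⟩ := hda
            subst hl
            rw [litEval_negLab] at hev
            exact Or.inl ⟨v, by simpa using hev, hnoc⟩
          | inr q =>
            obtain ⟨x, cur, ph⟩ := q
            obtain ⟨ht, hcur, hph, hl⟩ := hda
            simp only at hcur hph
            subst hcur
            subst hph
            have := (ih.2 x (x, true) true rfl).2 rfl
            exact Or.inr ⟨x, this.1, this.2⟩
        · intro x cur ph hz
          subst hz
          cases y with
          | inl s =>
            obtain ⟨hs, hcur, hph, hl⟩ := hda
            simp only at hcur hph
            subst hcur
            subst hph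
            exact ⟨fun _ => Relation.ReflTransGen.refl, fun h => absurd h (by simp)⟩
          | inr q =>
            obtain ⟨x0, cur0, ph0⟩ := q
            obtain ⟨hx, hrest⟩ := hda
            simp only at hx
            subst hx
            have ihy := ih.2 x cur0 ph0 rfl
            rcases hrest with ⟨hph, harc⟩ | ⟨hc0, hc1, hp0, hp1, hl⟩
            · simp only at hph
              subst hph
              have harcP : ArrP P α cur0 cur := (arrLab_iff P α cur0 cur).mp ⟨l, harc, hev⟩
              constructor
              · intro h0
                exact ((ihy.1 h0).tail harcP)
              · intro h1
                obtain ⟨ha, hb⟩ := ihy.2 h1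
                exact ⟨ha, hb.tail harcP⟩
            · simp only at hc0 hc1 hp0 hp1
              subst hc1
              subst hp1
              constructor
              · intro hcontra
                exact absurd hcontra (by simp)
              · intro _
                have := ihy.1 hp0
                rw [hc0] at this
                exact ⟨this, Relation.ReflTransGen.refl⟩
    exact (key (Sum.inl true) h).1 true rfl rfl
  · rintro (⟨v, hfalse, hnoc⟩ | ⟨x, h1, h2⟩)
    · refine Relation.ReflTransGen.single ?_
      refine ⟨negLab (P.label v), ⟨rfl, rfl, v, hnoc, rfl⟩, ?_⟩
      rw [litEval_negLab, hfalse]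
      rfl
    · have lift : ∀ (ph : Bool) (a b : LitT P), Relation.ReflTransGen (ArrP P α) a b →
          Relation.ReflTransGen cstep (Sum.inr (x, a, ph)) (Sum.inr (x, b, ph)) := by
        intro ph a b hab
        refine Relation.ReflTransGen.lift (fun cur => (Sum.inr (x, cur, ph) : DQ P)) ?_ _ _ hab
        intro p q hpq
        obtain ⟨l, harc, hev⟩ := (arrLab_iff P α p q).mpr hpq
        exact ⟨l, ⟨rfl, Or.inl ⟨rfl, harc⟩⟩, hev⟩
      have entry : cstep (Sum.inl false) (Sum.inr (x, (x, true), false)) :=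
        ⟨.inl true, ⟨rfl, rfl, rfl, rfl⟩, rfl⟩
      have switch : cstep (Sum.inr (x, (x, false), false)) (Sum.inr (x, (x, false), true)) :=
        ⟨.inl true, ⟨rfl, Or.inr ⟨rfl, rfl, rfl, rfl, rfl⟩⟩, rfl⟩
      have exit : cstep (Sum.inr (x, (x, true), true)) (Sum.inl true) :=
        ⟨.inl true, ⟨rfl, rfl, rfl, rfl⟩, rfl⟩
      exact ((((Relation.ReflTransGen.single entry).trans
        (lift false (x, true) (x, false) h1)).tail switch).trans
        (lift true (x, false) (x, true) h2)).tail exit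

lemma size_Dnbp_le : (Dnbp P).size ≤ 49 * (P.size + 1) ^ 4 * (2 + 2 * n) := by
  have h0 := size_ofSys (DQ P) (DA P) (Sum.inl false) (Sum.inl true)
  have hE : Fintype.card (EIdx P) = P.edges.card := Fintype.card_coe _
  have hcard : Fintype.card (DQ P) = 2 + P.edges.card * (P.edges.card * 2 * 2) := by
    simp [DQ, Fintype.card_sum, Fintype.card_prod, hE, Fintype.card_bool]
  have hEs : P.edges.card ≤ P.size := Nat.le_add_left _ _
  have hN : Fintype.card (DQ P) + 1 ≤ 7 * (P.size + 1) ^ 2 := by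
    rw [hcard]
    nlinarith [hEs, sq_nonneg (P.size + 1)]
  calc (Dnbp P).size ≤ (Fintype.card (DQ P) + 1) ^ 2 * (2 + 2 * n) := h0
  _ ≤ (7 * (P.size + 1) ^ 2) ^ 2 * (2 + 2 * n) :=
      Nat.mul_le_mul_right _ (Nat.pow_le_pow_left hN 2)
  _ ≤ 49 * (P.size + 1) ^ 4 * (2 + 2 * n) := by
      apply Nat.mul_le_mul_right
      have he : (7 * (P.size + 1) ^ 2) ^ 2 = 49 * (P.size + 1) ^ 4 := by ring
      rw [he]

/-- From a degree-2 HGP to an NBP computing its complement. -/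
theorem exists_D (hdeg : P.degLE 2) : ∃ B : NBP n,
    B.size ≤ 49 * (P.size + 1) ^ 4 * (2 + 2 * n) ∧
    ∀ α, Sem B α ↔ ¬ Accepts P α :=
  ⟨Dnbp P, size_Dnbp_le P, fun α => sem_Dnbp P hdeg α⟩

end
end NLP

namespace NLP
noncomputable section
open Classical Finset

variable {n : ℕ}

/-- Build an HGP from a hypergraph on an abstract fintype of vertices. -/
def hgpOfSys (V : Type) [Fintype V] (edges : Finset (Finset V)) (label : V → Lab n) :
    HGP n where
  nv := Fintype.card V
  edges := edges.image (Finset.image (Fintype.equivFin V))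
  label := fun i => label ((Fintype.equivFin V).symm i)

lemma hgpOfSys_size (V : Type) [Fintype V] (edges : Finset (Finset V))
    (label : V → Lab n) :
    (hgpOfSys V edges label).size ≤ Fintype.card V + edges.card := by
  have := Finset.card_image_le (s := edges) (f := Finset.image (Fintype.equivFin V))
  unfold hgpOfSys HGP.size
  simp only
  omega

lemma hgpOfSys_deg (V : Type) [Fintype V] (edges : Finset (Finset V))
    (label : V → Lab n) (d : ℕ)
    (h : ∀ x : V, (edges.filter (fun E => x ∈ E)).card ≤ d) :
    (hgpOfSys V edges label).degLE d := by
  intro i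
  set e := Fintype.equivFin V
  have key : ((hgpOfSys V edges label).edges.filter (fun E => i ∈ E)) ⊆
      (edges.filter (fun E => e.symm i ∈ E)).image (Finset.image e) := by
    intro E' hE'
    rw [Finset.mem_filter] at hE'
    obtain ⟨hE'1, hE'2⟩ := hE'
    simp only [hgpOfSys] at hE'1
    obtain ⟨E, hE, rfl⟩ := Finset.mem_image.mp hE'1
    obtain ⟨x, hx, hxe⟩ := Finset.mem_image.mp hE'2
    refine Finset.mem_image.mpr ⟨E, Finset.mem_filter.mpr ⟨hE, ?_⟩, rfl⟩
    have : x = e.symm i := by rw [← hxe]; exact (e.symm_apply_apply x).symm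
    rwa [this] at hx
  calc ((hgpOfSys V edges label).edges.filter (fun E => i ∈ E)).card ≤
      ((edges.filter (fun E => e.symm i ∈ E)).image (Finset.image e)).card :=
        Finset.card_le_card key
  _ ≤ (edges.filter (fun E => e.symm i ∈ E)).card := Finset.card_image_le
  _ ≤ d := h _

lemma hgpOfSys_accepts (V : Type) [Fintype V] (edges : Finset (Finset V))
    (label : V → Lab n) (α : Fin n → Bool) :
    Accepts (hgpOfSys V edges label) α ↔
      ∃ S ⊆ edges, ((S : Set (Finset V)).Pairwise fun e f => Disjoint e f) ∧
        ∀ x : V, litEval α (label x) = false → ∃ E ∈ S, x ∈ E := by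
  set e := Fintype.equivFin V with he
  constructor
  · rintro ⟨S', hS'sub, hS'dis, hS'cov⟩
    refine ⟨S'.image (Finset.image e.symm), ?_, ?_, ?_⟩
    · intro E hE
      obtain ⟨E', hE', rfl⟩ := Finset.mem_image.mp hE
      have := hS'sub hE'
      simp only [hgpOfSys] at this
      obtain ⟨E0, hE0, rfl⟩ := Finset.mem_image.mp this
      have : (E0.image e).image e.symm = E0 := by
        rw [Finset.image_image]
        simp
      rwa [this]
    · intro E1 hE1 E2 hE2 hne
      obtain ⟨E1', hE1', rfl⟩ := Finset.mem_image.mp (Finset.mem_coe.mp hE1)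
      obtain ⟨E2', hE2', rfl⟩ := Finset.mem_image.mp (Finset.mem_coe.mp hE2)
      have hne' : E1' ≠ E2' := fun h => hne (by rw [h])
      have hdis : Disjoint E1' E2' := hS'dis hE1' hE2' hne'
      show Disjoint _ _
      rw [Finset.disjoint_left] at hdis ⊢
      intro x hx1 hx2
      obtain ⟨y1, hy1, rfl⟩ := Finset.mem_image.mp hx1
      obtain ⟨y2, hy2, hy2e⟩ := Finset.mem_image.mp hx2
      have : y2 = y1 := e.symm.injective hy2e
      subst this
      exact hdis hy1 hy2
    · intro x hx
      have : litEval α ((hgpOfSys V edges label).label (e x)) = false := by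
        simp only [hgpOfSys]
        simpa [he] using hx
      obtain ⟨E', hE', hxE'⟩ := hS'cov (e x) this
      refine ⟨E'.image e.symm, Finset.mem_image_of_mem _ hE', ?_⟩
      exact Finset.mem_image.mpr ⟨e x, hxE', by simp⟩
  · rintro ⟨S, hSsub, hSdis, hScov⟩
    refine ⟨S.image (Finset.image e), ?_, ?_, ?_⟩
    · intro E' hE'
      rw [Finset.mem_image] at hE'
      obtain ⟨E, hE, rfl⟩ := hE'
      exact Finset.mem_image.mpr ⟨E, hSsub hE, rfl⟩
    · intro E1' hE1' E2' hE2' hne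
      obtain ⟨E1, hE1, rfl⟩ := Finset.mem_image.mp (Finset.mem_coe.mp hE1')
      obtain ⟨E2, hE2, rfl⟩ := Finset.mem_image.mp (Finset.mem_coe.mp hE2')
      have hne' : E1 ≠ E2 := fun h => hne (by rw [h])
      have hdis : Disjoint E1 E2 := hSdis hE1 hE2 hne'
      show Disjoint _ _
      rw [Finset.disjoint_left] at hdis ⊢
      intro x hx1 hx2
      obtain ⟨y1, hy1, rfl⟩ := Finset.mem_image.mp hx1
      obtain ⟨y2, hy2, hy2e⟩ := Finset.mem_image.mp hx2
      have : y2 = y1 := e.injective hy2e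
      subst this
      exact hdis hy1 hy2
    · intro i hi
      simp only [hgpOfSys] at hi
      obtain ⟨E, hE, hxE⟩ := hScov (e.symm i) hi
      refine ⟨E.image e, Finset.mem_image_of_mem _ hE, ?_⟩
      exact Finset.mem_image.mpr ⟨e.symm i, hxE, e.apply_symm_apply i⟩

end
end NLP

namespace NLP
noncomputable section
open Classical Finset

variable {n : ℕ} (B : NBP n)

abbrev AIdx := {a : Fin B.nv × Fin B.nv × Lab n // a ∈ B.arcs}
abbrev VC := Fin B.nv ⊕ (Bool ⊕ (AIdx B × Fin 3))

def inT (v : Fin B.nv) : VC B → Prop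
  | .inl w => w = v
  | .inr (.inl b) => b = false ∧ v = B.src
  | .inr (.inr (a, j)) => j = 1 ∧ a.1.1 = v

def inF (v : Fin B.nv) : VC B → Prop
  | .inl w => w = v
  | .inr (.inl b) => b = true ∧ v = B.tgt
  | .inr (.inr (a, j)) => j = 2 ∧ a.1.2.1 = v

def Tv (v : Fin B.nv) : Finset (VC B) := Finset.univ.filter (inT B v)
def Fev (v : Fin B.nv) : Finset (VC B) := Finset.univ.filter (inF B v)
def Ca (a : AIdx B) : Finset (VC B) := {.inr (.inr (a, 0)), .inr (.inr (a, 1))}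
def Da (a : AIdx B) : Finset (VC B) := {.inr (.inr (a, 0)), .inr (.inr (a, 2))}

def edgesC : Finset (Finset (VC B)) :=
  ((Finset.univ.image (Tv B)) ∪ (Finset.univ.image (Fev B))) ∪
  ((Finset.univ.image (Ca B)) ∪ (Finset.univ.image (Da B)))

def labelC : VC B → Lab n
  | .inl _ => .inl false
  | .inr (.inl _) => .inl false
  | .inr (.inr (a, j)) => if j = 0 then negLab a.1.2.2 else .inl true

lemma mem_Tv (v : Fin B.nv) (x : VC B) : x ∈ Tv B v ↔ inT B v x := by simp [Tv]
lemma mem_Fev (v : Fin B.nv) (x : VC B) : x ∈ Fev B v ↔ inF B v x := by simp [Fev]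
lemma mem_Ca (a : AIdx B) (x : VC B) :
    x ∈ Ca B a ↔ x = .inr (.inr (a, 0)) ∨ x = .inr (.inr (a, 1)) := by simp [Ca]
lemma mem_Da (a : AIdx B) (x : VC B) :
    x ∈ Da B a ↔ x = .inr (.inr (a, 0)) ∨ x = .inr (.inr (a, 2)) := by simp [Da]

lemma mem_edgesC (E : Finset (VC B)) :
    E ∈ edgesC B ↔ (∃ v, E = Tv B v) ∨ (∃ v, E = Fev B v) ∨
      (∃ a, E = Ca B a) ∨ (∃ a, E = Da B a) := by
  simp only [edgesC, Finset.mem_union, Finset.mem_image, Finset.mem_univ, true_and]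
  constructor
  · rintro ((⟨v, rfl⟩ | ⟨v, rfl⟩) | (⟨a, rfl⟩ | ⟨a, rfl⟩))
    · exact Or.inl ⟨v, rfl⟩
    · exact Or.inr (Or.inl ⟨v, rfl⟩)
    · exact Or.inr (Or.inr (Or.inl ⟨a, rfl⟩))
    · exact Or.inr (Or.inr (Or.inr ⟨a, rfl⟩))
  · rintro (⟨v, rfl⟩ | ⟨v, rfl⟩ | ⟨a, rfl⟩ | ⟨a, rfl⟩)
    · exact Or.inl (Or.inl ⟨v, rfl⟩)
    · exact Or.inl (Or.inr ⟨v, rfl⟩)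
    · exact Or.inr (Or.inl ⟨a, rfl⟩)
    · exact Or.inr (Or.inr ⟨a, rfl⟩)

lemma only_TF {E : Finset (VC B)} (hE : E ∈ edgesC B) {v : Fin B.nv}
    (hv : (.inl v : VC B) ∈ E) : E = Tv B v ∨ E = Fev B v := by
  rcases (mem_edgesC B E).mp hE with ⟨w, rfl⟩ | ⟨w, rfl⟩ | ⟨a, rfl⟩ | ⟨a, rfl⟩
  · rw [mem_Tv] at hv
    have : v = w := hv
    exact Or.inl (by rw [← this])
  · rw [mem_Fev] at hv
    have : v = w := hv
    exact Or.inr (by rw [← this])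
  · rw [mem_Ca] at hv
    rcases hv with h | h <;> exact absurd h (by simp)
  · rw [mem_Da] at hv
    rcases hv with h | h <;> exact absurd h (by simp)

lemma only_Ws {E : Finset (VC B)} (hE : E ∈ edgesC B)
    (hv : (.inr (.inl false) : VC B) ∈ E) : E = Tv B B.src := by
  rcases (mem_edgesC B E).mp hE with ⟨w, rfl⟩ | ⟨w, rfl⟩ | ⟨a, rfl⟩ | ⟨a, rfl⟩
  · rw [mem_Tv] at hv
    obtain ⟨-, rfl⟩ := hv
    rfl
  · rw [mem_Fev] at hv
    exact absurd hv.1 (by simp)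
  · rw [mem_Ca] at hv
    rcases hv with h | h <;> exact absurd h (by simp)
  · rw [mem_Da] at hv
    rcases hv with h | h <;> exact absurd h (by simp)

lemma only_Wt {E : Finset (VC B)} (hE : E ∈ edgesC B)
    (hv : (.inr (.inl true) : VC B) ∈ E) : E = Fev B B.tgt := by
  rcases (mem_edgesC B E).mp hE with ⟨w, rfl⟩ | ⟨w, rfl⟩ | ⟨a, rfl⟩ | ⟨a, rfl⟩
  · rw [mem_Tv] at hv
    exact absurd hv.1 (by simp)
  · rw [mem_Fev] at hv
    obtain ⟨-, rfl⟩ := hv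
    rfl
  · rw [mem_Ca] at hv
    rcases hv with h | h <;> exact absurd h (by simp)
  · rw [mem_Da] at hv
    rcases hv with h | h <;> exact absurd h (by simp)

lemma only_CD {E : Finset (VC B)} (hE : E ∈ edgesC B) {a : AIdx B}
    (hv : (.inr (.inr (a, 0)) : VC B) ∈ E) : E = Ca B a ∨ E = Da B a := by
  rcases (mem_edgesC B E).mp hE with ⟨w, rfl⟩ | ⟨w, rfl⟩ | ⟨a', rfl⟩ | ⟨a', rfl⟩
  · rw [mem_Tv] at hv
    exact absurd hv.1 (by decide)
  · rw [mem_Fev] at hv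
    exact absurd hv.1 (by decide)
  · rw [mem_Ca] at hv
    rcases hv with h | h
    · simp only [Sum.inr.injEq, Prod.mk.injEq] at h
      exact Or.inl (by rw [h.1])
    · simp only [Sum.inr.injEq, Prod.mk.injEq] at h
      exact absurd h.2 (by decide)
  · rw [mem_Da] at hv
    rcases hv with h | h
    · simp only [Sum.inr.injEq, Prod.mk.injEq] at h
      exact Or.inr (by rw [h.1])
    · simp only [Sum.inr.injEq, Prod.mk.injEq] at h
      exact absurd h.2 (by decide)

lemma only_TC {E : Finset (VC B)} (hE : E ∈ edgesC B) {a : AIdx B}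
    (hv : (.inr (.inr (a, 1)) : VC B) ∈ E) : E = Tv B a.1.1 ∨ E = Ca B a := by
  rcases (mem_edgesC B E).mp hE with ⟨w, rfl⟩ | ⟨w, rfl⟩ | ⟨a', rfl⟩ | ⟨a', rfl⟩
  · rw [mem_Tv] at hv
    exact Or.inl (by rw [← hv.2])
  · rw [mem_Fev] at hv
    exact absurd hv.1 (by decide)
  · rw [mem_Ca] at hv
    rcases hv with h | h
    · simp only [Sum.inr.injEq, Prod.mk.injEq] at h
      exact absurd h.2 (by decide)
    · simp only [Sum.inr.injEq, Prod.mk.injEq] at h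
      exact Or.inr (by rw [h.1])
  · rw [mem_Da] at hv
    rcases hv with h | h
    · simp only [Sum.inr.injEq, Prod.mk.injEq] at h
      exact absurd h.2 (by decide)
    · simp only [Sum.inr.injEq, Prod.mk.injEq] at h
      exact absurd h.2 (by decide)

lemma only_FD {E : Finset (VC B)} (hE : E ∈ edgesC B) {a : AIdx B}
    (hv : (.inr (.inr (a, 2)) : VC B) ∈ E) : E = Fev B a.1.2.1 ∨ E = Da B a := by
  rcases (mem_edgesC B E).mp hE with ⟨w, rfl⟩ | ⟨w, rfl⟩ | ⟨a', rfl⟩ | ⟨a', rfl⟩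
  · rw [mem_Tv] at hv
    exact absurd hv.1 (by decide)
  · rw [mem_Fev] at hv
    exact Or.inl (by rw [← hv.2])
  · rw [mem_Ca] at hv
    rcases hv with h | h
    · simp only [Sum.inr.injEq, Prod.mk.injEq] at h
      exact absurd h.2 (by decide)
    · simp only [Sum.inr.injEq, Prod.mk.injEq] at h
      exact absurd h.2 (by decide)
  · rw [mem_Da] at hv
    rcases hv with h | h
    · simp only [Sum.inr.injEq, Prod.mk.injEq] at h
      exact absurd h.2 (by decide)
    · simp only [Sum.inr.injEq, Prod.mk.injEq] at h
      exact Or.inr (by rw [h.1])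

lemma card_pair_le {γ : Type*} [DecidableEq γ] (a b : γ) : ({a, b} : Finset γ).card ≤ 2 := by
  apply le_trans (Finset.card_insert_le _ _)
  simp

set_option maxHeartbeats 1000000 in
lemma degC : ∀ x : VC B, ((edgesC B).filter (fun E => x ∈ E)).card ≤ 2 := by
  intro x
  have sub : ∀ (E1 E2 : Finset (VC B)),
      (∀ E, E ∈ edgesC B → x ∈ E → E = E1 ∨ E = E2) →
      ((edgesC B).filter (fun E => x ∈ E)).card ≤ 2 := by
    intro E1 E2 h
    calc ((edgesC B).filter (fun E => x ∈ E)).card ≤ ({E1, E2} : Finset _).card := by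
          apply Finset.card_le_card
          intro E hE
          rw [Finset.mem_filter] at hE
          rcases h E hE.1 hE.2 with rfl | rfl <;> simp
    _ ≤ 2 := card_pair_le _ _
  rcases x with v | b | ⟨a, j⟩
  · exact sub (Tv B v) (Fev B v) (fun E hE hx => only_TF B hE hx)
  · cases b
    · exact sub (Tv B B.src) (Tv B B.src) (fun E hE hx => Or.inl (only_Ws B hE hx))
    · exact sub (Fev B B.tgt) (Fev B B.tgt) (fun E hE hx => Or.inl (only_Wt B hE hx))
  · obtain ⟨jv, hj⟩ := j
    interval_cases jv
    · exact sub (Ca B a) (Da B a) (fun E hE hx => only_CD B hE hx)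
    · exact sub (Tv B a.1.1) (Ca B a) (fun E hE hx => only_TC B hE hx)
    · exact sub (Fev B a.1.2.1) (Da B a) (fun E hE hx => only_FD B hE hx)

end
end NLP

namespace NLP
noncomputable section
open Classical Finset

variable {n : ℕ} (B : NBP n) (α : Fin n → Bool)

lemma C_sound (S : Finset (Finset (VC B))) (hsub : S ⊆ edgesC B)
    (hdis : ((S : Set (Finset (VC B)))).Pairwise fun e f => Disjoint e f)
    (hcov : ∀ x : VC B, litEval α (labelC B x) = false → ∃ E ∈ S, x ∈ E) :
    ¬ Sem B α := by
  have hTF : ∀ v : Fin B.nv, Tv B v ∈ S ∨ Fev B v ∈ S := by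
    intro v
    obtain ⟨E, hES, hvE⟩ := hcov (.inl v) rfl
    rcases only_TF B (hsub hES) hvE with rfl | rfl
    · exact Or.inl hES
    · exact Or.inr hES
  have hFtgt : Fev B B.tgt ∈ S := by
    obtain ⟨E, hES, hvE⟩ := hcov (.inr (.inl true)) rfl
    rw [only_Wt B (hsub hES) hvE] at hES
    exact hES
  have hclosure : ∀ a : AIdx B, litEval α a.1.2.2 = true → Tv B a.1.1 ∈ S →
      Tv B a.1.2.1 ∈ S := by
    intro a hl hT
    have hzlab : litEval α (labelC B (.inr (.inr (a, 0)))) = false := by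
      simp [labelC, litEval_negLab, hl]
    obtain ⟨E, hES, hzE⟩ := hcov _ hzlab
    rcases only_CD B (hsub hES) hzE with rfl | rfl
    · exfalso
      have hne : Ca B a ≠ Tv B a.1.1 := by
        intro h
        have hz : (.inr (.inr (a, 0)) : VC B) ∈ Ca B a := by
          rw [mem_Ca]; left; rfl
        rw [h, mem_Tv] at hz
        exact absurd hz.1 (by decide)
      have hd : Disjoint (Ca B a) (Tv B a.1.1) := hdis hES hT hne
      have hp1 : (.inr (.inr (a, 1)) : VC B) ∈ Ca B a := by rw [mem_Ca]; right; rfl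
      have hp2 : (.inr (.inr (a, 1)) : VC B) ∈ Tv B a.1.1 := by
        rw [mem_Tv]; exact ⟨rfl, rfl⟩
      exact (Finset.disjoint_left.mp hd hp1) hp2
    · have hFnot : Fev B a.1.2.1 ∉ S := by
        intro hF
        have hne : Da B a ≠ Fev B a.1.2.1 := by
          intro h
          have hz : (.inr (.inr (a, 0)) : VC B) ∈ Da B a := by
            rw [mem_Da]; left; rfl
          rw [h, mem_Fev] at hz
          exact absurd hz.1 (by decide)
        have hd : Disjoint (Da B a) (Fev B a.1.2.1) := hdis hES hF hne
        have hq1 : (.inr (.inr (a, 2)) : VC B) ∈ Da B a := by rw [mem_Da]; right; rfl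
        have hq2 : (.inr (.inr (a, 2)) : VC B) ∈ Fev B a.1.2.1 := by
          rw [mem_Fev]; exact ⟨rfl, rfl⟩
        exact (Finset.disjoint_left.mp hd hq1) hq2
      rcases hTF a.1.2.1 with h | h
      · exact h
      · exact absurd h hFnot
  have hRel : ∀ i, ∀ v ∈ Rset B α i, Tv B v ∈ S := by
    intro i
    induction i with
    | zero =>
      intro v hv
      simp [Rset] at hv
      subst hv
      obtain ⟨E, hES, hvE⟩ := hcov (.inr (.inl false)) rfl
      rw [only_Ws B (hsub hES) hvE] at hES
      exact hES
    | succ i ih =>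
      intro v hv
      rw [Rset] at hv
      rcases Finset.mem_union.mp hv with h | h
      · exact ih v h
      · simp only [Finset.mem_filter] at h
        obtain ⟨u, hu, l, harc, hev⟩ := h.2
        exact hclosure ⟨(u, v, l), harc⟩ hev (ih u hu)
  intro hsem
  have hmem := (sem_iff_tgt_mem B α).mp hsem
  have hT := hRel B.nv B.tgt hmem
  have hne : Tv B B.tgt ≠ Fev B B.tgt := by
    intro h
    have hw : (.inr (.inl true) : VC B) ∈ Fev B B.tgt := by
      rw [mem_Fev]; exact ⟨rfl, rfl⟩
    rw [← h, mem_Tv] at hw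
    exact absurd hw.1 (by simp)
  have hd : Disjoint (Tv B B.tgt) (Fev B B.tgt) := hdis hT hFtgt hne
  have h1 : (.inl B.tgt : VC B) ∈ Tv B B.tgt := by rw [mem_Tv]; rfl
  have h2 : (.inl B.tgt : VC B) ∈ Fev B B.tgt := by rw [mem_Fev]; rfl
  exact (Finset.disjoint_left.mp hd h1) h2

/-- The witness family of hyperedges when B rejects. -/
def Sset : Finset (Finset (VC B)) :=
  (((Rset B α B.nv).image (Tv B)) ∪ ((Finset.univ \ Rset B α B.nv).image (Fev B))) ∪
  (((Finset.univ.filter (fun a : AIdx B =>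
      litEval α a.1.2.2 = true ∧ a.1.1 ∉ Rset B α B.nv)).image (Ca B)) ∪
   ((Finset.univ.filter (fun a : AIdx B =>
      litEval α a.1.2.2 = true ∧ a.1.1 ∈ Rset B α B.nv)).image (Da B)))

lemma mem_Sset (E : Finset (VC B)) :
    E ∈ Sset B α ↔
      (∃ v, v ∈ Rset B α B.nv ∧ E = Tv B v) ∨
      (∃ v, v ∉ Rset B α B.nv ∧ E = Fev B v) ∨
      (∃ a : AIdx B, (litEval α a.1.2.2 = true ∧ a.1.1 ∉ Rset B α B.nv) ∧ E = Ca B a) ∨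
      (∃ a : AIdx B, (litEval α a.1.2.2 = true ∧ a.1.1 ∈ Rset B α B.nv) ∧ E = Da B a) := by
  simp only [Sset, Finset.mem_union, Finset.mem_image, Finset.mem_sdiff, Finset.mem_univ,
    Finset.mem_filter, true_and]
  constructor
  · rintro ((⟨v, hv, rfl⟩ | ⟨v, hv, rfl⟩) | (⟨a, ha, rfl⟩ | ⟨a, ha, rfl⟩))
    · exact Or.inl ⟨v, hv, rfl⟩
    · exact Or.inr (Or.inl ⟨v, hv, rfl⟩)
    · exact Or.inr (Or.inr (Or.inl ⟨a, ha, rfl⟩))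
    · exact Or.inr (Or.inr (Or.inr ⟨a, ha, rfl⟩))
  · rintro (⟨v, hv, rfl⟩ | ⟨v, hv, rfl⟩ | ⟨a, ha, rfl⟩ | ⟨a, ha, rfl⟩)
    · exact Or.inl (Or.inl ⟨v, hv, rfl⟩)
    · exact Or.inl (Or.inr ⟨v, hv, rfl⟩)
    · exact Or.inr (Or.inl ⟨a, ha, rfl⟩)
    · exact Or.inr (Or.inr ⟨a, ha, rfl⟩)

lemma elim_inl {E : Finset (VC B)} (hE : E ∈ Sset B α) {v : Fin B.nv}
    (hx : (.inl v : VC B) ∈ E) :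
    (E = Tv B v ∧ v ∈ Rset B α B.nv) ∨ (E = Fev B v ∧ v ∉ Rset B α B.nv) := by
  rcases (mem_Sset B α E).mp hE with ⟨w, hw, rfl⟩ | ⟨w, hw, rfl⟩ | ⟨a, ha, rfl⟩ | ⟨a, ha, rfl⟩
  · rw [mem_Tv] at hx
    have : v = w := hx
    subst this
    exact Or.inl ⟨rfl, hw⟩
  · rw [mem_Fev] at hx
    have : v = w := hx
    subst this
    exact Or.inr ⟨rfl, hw⟩
  · rw [mem_Ca] at hx
    rcases hx with h | h <;> exact absurd h (by simp)
  · rw [mem_Da] at hx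
    rcases hx with h | h <;> exact absurd h (by simp)

lemma elim_ws {E : Finset (VC B)} (hE : E ∈ Sset B α)
    (hx : (.inr (.inl false) : VC B) ∈ E) : E = Tv B B.src := by
  rcases (mem_Sset B α E).mp hE with ⟨w, hw, rfl⟩ | ⟨w, hw, rfl⟩ | ⟨a, ha, rfl⟩ | ⟨a, ha, rfl⟩
  · rw [mem_Tv] at hx
    rw [hx.2]
  · rw [mem_Fev] at hx
    exact absurd hx.1 (by simp)
  · rw [mem_Ca] at hx
    rcases hx with h | h <;> exact absurd h (by simp)
  · rw [mem_Da] at hx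
    rcases hx with h | h <;> exact absurd h (by simp)

lemma elim_wt {E : Finset (VC B)} (hE : E ∈ Sset B α)
    (hx : (.inr (.inl true) : VC B) ∈ E) : E = Fev B B.tgt := by
  rcases (mem_Sset B α E).mp hE with ⟨w, hw, rfl⟩ | ⟨w, hw, rfl⟩ | ⟨a, ha, rfl⟩ | ⟨a, ha, rfl⟩
  · rw [mem_Tv] at hx
    exact absurd hx.1 (by simp)
  · rw [mem_Fev] at hx
    rw [hx.2]
  · rw [mem_Ca] at hx
    rcases hx with h | h <;> exact absurd h (by simp)
  · rw [mem_Da] at hx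
    rcases hx with h | h <;> exact absurd h (by simp)

lemma elim_z {E : Finset (VC B)} (hE : E ∈ Sset B α) {a : AIdx B}
    (hx : (.inr (.inr (a, 0)) : VC B) ∈ E) :
    (E = Ca B a ∧ a.1.1 ∉ Rset B α B.nv) ∨ (E = Da B a ∧ a.1.1 ∈ Rset B α B.nv) := by
  rcases (mem_Sset B α E).mp hE with ⟨w, hw, rfl⟩ | ⟨w, hw, rfl⟩ | ⟨a', ha', rfl⟩ |
    ⟨a', ha', rfl⟩
  · rw [mem_Tv] at hx
    exact absurd hx.1 (by decide)
  · rw [mem_Fev] at hx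
    exact absurd hx.1 (by decide)
  · rw [mem_Ca] at hx
    rcases hx with h | h
    · simp only [Sum.inr.injEq, Prod.mk.injEq] at h
      obtain ⟨rfl, -⟩ := h
      exact Or.inl ⟨rfl, ha'.2⟩
    · simp only [Sum.inr.injEq, Prod.mk.injEq] at h
      exact absurd h.2 (by decide)
  · rw [mem_Da] at hx
    rcases hx with h | h
    · simp only [Sum.inr.injEq, Prod.mk.injEq] at h
      obtain ⟨rfl, -⟩ := h
      exact Or.inr ⟨rfl, ha'.2⟩
    · simp only [Sum.inr.injEq, Prod.mk.injEq] at h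
      exact absurd h.2 (by decide)

lemma elim_p {E : Finset (VC B)} (hE : E ∈ Sset B α) {a : AIdx B}
    (hx : (.inr (.inr (a, 1)) : VC B) ∈ E) :
    (E = Tv B a.1.1 ∧ a.1.1 ∈ Rset B α B.nv) ∨ (E = Ca B a ∧ a.1.1 ∉ Rset B α B.nv) := by
  rcases (mem_Sset B α E).mp hE with ⟨w, hw, rfl⟩ | ⟨w, hw, rfl⟩ | ⟨a', ha', rfl⟩ |
    ⟨a', ha', rfl⟩
  · rw [mem_Tv] at hx
    obtain ⟨-, h2⟩ := hx
    subst h2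
    exact Or.inl ⟨rfl, hw⟩
  · rw [mem_Fev] at hx
    exact absurd hx.1 (by decide)
  · rw [mem_Ca] at hx
    rcases hx with h | h
    · simp only [Sum.inr.injEq, Prod.mk.injEq] at h
      exact absurd h.2 (by decide)
    · simp only [Sum.inr.injEq, Prod.mk.injEq] at h
      obtain ⟨rfl, -⟩ := h
      exact Or.inr ⟨rfl, ha'.2⟩
  · rw [mem_Da] at hx
    rcases hx with h | h
    · simp only [Sum.inr.injEq, Prod.mk.injEq] at h
      exact absurd h.2 (by decide)
    · simp only [Sum.inr.injEq, Prod.mk.injEq] at h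
      exact absurd h.2 (by decide)

lemma elim_q {E : Finset (VC B)} (hE : E ∈ Sset B α) {a : AIdx B}
    (hx : (.inr (.inr (a, 2)) : VC B) ∈ E) :
    (E = Fev B a.1.2.1 ∧ a.1.2.1 ∉ Rset B α B.nv) ∨
    (E = Da B a ∧ litEval α a.1.2.2 = true ∧ a.1.1 ∈ Rset B α B.nv) := by
  rcases (mem_Sset B α E).mp hE with ⟨w, hw, rfl⟩ | ⟨w, hw, rfl⟩ | ⟨a', ha', rfl⟩ |
    ⟨a', ha', rfl⟩
  · rw [mem_Tv] at hx
    exact absurd hx.1 (by decide)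
  · rw [mem_Fev] at hx
    obtain ⟨-, h2⟩ := hx
    subst h2
    exact Or.inl ⟨rfl, hw⟩
  · rw [mem_Ca] at hx
    rcases hx with h | h
    · simp only [Sum.inr.injEq, Prod.mk.injEq] at h
      exact absurd h.2 (by decide)
    · simp only [Sum.inr.injEq, Prod.mk.injEq] at h
      exact absurd h.2 (by decide)
  · rw [mem_Da] at hx
    rcases hx with h | h
    · simp only [Sum.inr.injEq, Prod.mk.injEq] at h
      exact absurd h.2 (by decide)
    · simp only [Sum.inr.injEq, Prod.mk.injEq] at h
      obtain ⟨rfl, -⟩ := h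
      exact Or.inr ⟨rfl, ha'.1, ha'.2⟩

lemma C_complete (htgt : ¬ Sem B α) :
    ∃ S ⊆ edgesC B, ((S : Set (Finset (VC B)))).Pairwise (fun e f => Disjoint e f) ∧
      ∀ x : VC B, litEval α (labelC B x) = false → ∃ E ∈ S, x ∈ E := by
  rw [sem_iff_tgt_mem] at htgt
  refine ⟨Sset B α, ?_, ?_, ?_⟩
  · intro E hE
    rcases (mem_Sset B α E).mp hE with ⟨v, _, rfl⟩ | ⟨v, _, rfl⟩ | ⟨a, _, rfl⟩ | ⟨a, _, rfl⟩
    · exact (mem_edgesC B _).mpr (Or.inl ⟨v, rfl⟩)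
    · exact (mem_edgesC B _).mpr (Or.inr (Or.inl ⟨v, rfl⟩))
    · exact (mem_edgesC B _).mpr (Or.inr (Or.inr (Or.inl ⟨a, rfl⟩)))
    · exact (mem_edgesC B _).mpr (Or.inr (Or.inr (Or.inr ⟨a, rfl⟩)))
  · intro E1 hE1 E2 hE2 hne
    rw [Finset.mem_coe] at hE1 hE2
    show Disjoint E1 E2
    rw [Finset.disjoint_left]
    intro x hx1 hx2
    apply hne
    rcases x with v | b | ⟨a, j⟩
    · rcases elim_inl B α hE1 hx1 with ⟨rfl, h1⟩ | ⟨rfl, h1⟩ <;>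
        rcases elim_inl B α hE2 hx2 with ⟨rfl, h2⟩ | ⟨rfl, h2⟩
      · rfl
      · exact absurd h1 h2
      · exact absurd h2 h1
      · rfl
    · cases b
      · rw [elim_ws B α hE1 hx1, elim_ws B α hE2 hx2]
      · rw [elim_wt B α hE1 hx1, elim_wt B α hE2 hx2]
    · obtain ⟨jv, hj⟩ := j
      interval_cases jv
      · rcases elim_z B α hE1 hx1 with ⟨rfl, h1⟩ | ⟨rfl, h1⟩ <;>
          rcases elim_z B α hE2 hx2 with ⟨rfl, h2⟩ | ⟨rfl, h2⟩
        · rfl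
        · exact absurd h2 h1
        · exact absurd h1 h2
        · rfl
      · rcases elim_p B α hE1 hx1 with ⟨rfl, h1⟩ | ⟨rfl, h1⟩ <;>
          rcases elim_p B α hE2 hx2 with ⟨rfl, h2⟩ | ⟨rfl, h2⟩
        · rfl
        · exact absurd h1 h2
        · exact absurd h2 h1
        · rfl
      · rcases elim_q B α hE1 hx1 with ⟨rfl, h1⟩ | ⟨rfl, h1, h1'⟩ <;>
          rcases elim_q B α hE2 hx2 with ⟨rfl, h2⟩ | ⟨rfl, h2, h2'⟩
        · rfl
        · exfalso
          apply h1
          exact mem_Rset_nv B α (mem_Rset_succ_of_step B α h2' ⟨a.1.2.2, a.2, h2⟩)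
        · exfalso
          apply h2
          exact mem_Rset_nv B α (mem_Rset_succ_of_step B α h1' ⟨a.1.2.2, a.2, h1⟩)
        · rfl
  · intro x hx
    rcases x with v | b | ⟨a, j⟩
    · by_cases hv : v ∈ Rset B α B.nv
      · refine ⟨Tv B v, (mem_Sset B α _).mpr (Or.inl ⟨v, hv, rfl⟩), ?_⟩
        rw [mem_Tv]; rfl
      · refine ⟨Fev B v, (mem_Sset B α _).mpr (Or.inr (Or.inl ⟨v, hv, rfl⟩)), ?_⟩
        rw [mem_Fev]; rfl
    · cases b
      · refine ⟨Tv B B.src, (mem_Sset B α _).mpr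
          (Or.inl ⟨B.src, src_mem_Rset B α B.nv, rfl⟩), ?_⟩
        rw [mem_Tv]; exact ⟨rfl, rfl⟩
      · refine ⟨Fev B B.tgt, (mem_Sset B α _).mpr
          (Or.inr (Or.inl ⟨B.tgt, htgt, rfl⟩)), ?_⟩
        rw [mem_Fev]; exact ⟨rfl, rfl⟩
    · obtain ⟨jv, hj⟩ := j
      interval_cases jv
      · have hl : litEval α a.1.2.2 = true := by
          have hx' : litEval α (negLab (a.1.2.2)) = false := by
            simpa [labelC] using hx
          rw [litEval_negLab] at hx'
          simpa using hx'
        by_cases hsrc : a.1.1 ∈ Rset B α B.nv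
        · refine ⟨Da B a, (mem_Sset B α _).mpr
            (Or.inr (Or.inr (Or.inr ⟨a, ⟨hl, hsrc⟩, rfl⟩))), ?_⟩
          rw [mem_Da]; left; rfl
        · refine ⟨Ca B a, (mem_Sset B α _).mpr
            (Or.inr (Or.inr (Or.inl ⟨a, ⟨hl, hsrc⟩, rfl⟩))), ?_⟩
          rw [mem_Ca]; left; rfl
      · exact absurd hx (by simp [labelC, litEval])
      · exact absurd hx (by simp [labelC, litEval])

/-- The degree-2 HGP computing the complement of an NBP. -/
def Chgp : HGP n := hgpOfSys (VC B) (edgesC B) (labelC B)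

theorem exists_C : ∃ P : HGP n, P.degLE 2 ∧ P.size ≤ 5 * B.size + 2 ∧
    ∀ α, Accepts P α ↔ ¬ Sem B α := by
  refine ⟨Chgp B, hgpOfSys_deg _ _ _ _ (fun x => ?_), ?_, ?_⟩
  · have h := degC B x
    have e1 := Finset.filter_congr_decidable (edgesC B)
      (fun E : Finset (VC B) => x ∈ E) (Classical.decPred _)
    rw [Finset.filter_congr_decidable]
    exact h
  · have h1 := hgpOfSys_size (VC B) (edgesC B) (labelC B)
    have hA : Fintype.card (AIdx B) = B.arcs.card := Fintype.card_coe _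
    have hVC : Fintype.card (VC B) = B.nv + (2 + B.arcs.card * 3) := by
      simp [VC, Fintype.card_sum, Fintype.card_prod, hA, Fintype.card_bool]
    have hedges : (edgesC B).card ≤ B.nv + B.nv + (B.arcs.card + B.arcs.card) := by
      calc (edgesC B).card ≤
          ((Finset.univ.image (Tv B)) ∪ (Finset.univ.image (Fev B))).card +
          ((Finset.univ.image (Ca B)) ∪ (Finset.univ.image (Da B))).card :=
            Finset.card_union_le _ _
      _ ≤ ((Finset.univ.image (Tv B)).card + (Finset.univ.image (Fev B)).card) +
          ((Finset.univ.image (Ca B)).card + (Finset.univ.image (Da B)).card) := by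
            have := Finset.card_union_le (Finset.univ.image (Tv B))
              (Finset.univ.image (Fev B))
            have := Finset.card_union_le (Finset.univ.image (Ca B))
              (Finset.univ.image (Da B))
            omega
      _ ≤ B.nv + B.nv + (B.arcs.card + B.arcs.card) := by
            have h1 := Finset.card_image_le (s := (Finset.univ : Finset (Fin B.nv)))
              (f := Tv B)
            have h2 := Finset.card_image_le (s := (Finset.univ : Finset (Fin B.nv)))
              (f := Fev B)
            have h3 := Finset.card_image_le (s := (Finset.univ : Finset (AIdx B)))
              (f := Ca B)
            have h4 := Finset.card_image_le (s := (Finset.univ : Finset (AIdx B)))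
              (f := Da B)
            simp only [Finset.card_univ, Fintype.card_fin, hA] at h1 h2 h3 h4
            omega
    unfold NBP.size
    have := h1
    rw [hVC] at this
    calc (Chgp B).size ≤ (B.nv + (2 + B.arcs.card * 3)) + (edgesC B).card := this
    _ ≤ 5 * (B.nv + B.arcs.card) + 2 := by omega
  · intro α
    rw [show Accepts (Chgp B) α ↔ _ from hgpOfSys_accepts (VC B) (edgesC B) (labelC B) α]
    constructor
    · rintro ⟨S, hsub, hdis, hcov⟩
      exact C_sound B α S hsub hdis hcov
    · exact C_complete B α

end
end NLP

namespace NLP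
noncomputable section
open Classical

lemma one_le_pow (n k : ℕ) : 1 ≤ (n + 1) ^ k := Nat.one_le_pow _ _ (Nat.succ_pos n)

lemma pad_le {s c k n : ℕ} (h : s ≤ c * (n + 1) ^ k) : s + 2 ≤ (c + 2) * (n + 1) ^ k := by
  have := one_le_pow n k
  nlinarith

lemma pow16_le {s c k n : ℕ} (h : s ≤ c * (n + 1) ^ k) :
    s ^ 16 ≤ c ^ 16 * (n + 1) ^ (16 * k) := by
  calc s ^ 16 ≤ (c * (n + 1) ^ k) ^ 16 := Nat.pow_le_pow_left h 16
  _ = c ^ 16 * ((n + 1) ^ k) ^ 16 := by rw [mul_pow]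
  _ = c ^ 16 * (n + 1) ^ (16 * k) := by rw [← pow_mul, Nat.mul_comm k 16]

lemma pow4_le {s c k n : ℕ} (h : s ≤ c * (n + 1) ^ k) :
    s ^ 4 ≤ c ^ 4 * (n + 1) ^ (4 * k) := by
  calc s ^ 4 ≤ (c * (n + 1) ^ k) ^ 4 := Nat.pow_le_pow_left h 4
  _ = c ^ 4 * ((n + 1) ^ k) ^ 4 := by rw [mul_pow]
  _ = c ^ 4 * (n + 1) ^ (4 * k) := by rw [← pow_mul, Nat.mul_comm k 4]

lemma two_n_le (n : ℕ) : 2 + 2 * n ≤ 2 * (n + 1) := by omega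

theorem main_theorem (f : ∀ n : ℕ, (Fin n → Bool) → Bool) :
    (∃ c k : ℕ, ∀ n : ℕ, ∃ B : NBP n, B.size ≤ c * (n + 1) ^ k ∧ B.Computes (f n)) ↔
    (∃ c k : ℕ, ∀ n : ℕ, ∃ P : HGP n, P.degLE 2 ∧ P.size ≤ c * (n + 1) ^ k ∧
        P.Computes (f n)) := by
  constructor
  · rintro ⟨c, k, h⟩
    refine ⟨5 * (800 * (c + 2) ^ 16) + 2, 16 * k + 1, fun n => ?_⟩
    obtain ⟨B, hBsize, hBcomp⟩ := h n
    obtain ⟨B', hB'size, hB'sem⟩ := exists_complement B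
    obtain ⟨P, hPdeg, hPsize, hPsem⟩ := exists_C B'
    refine ⟨P, hPdeg, ?_, ?_⟩
    · have h1 : B.size + 2 ≤ (c + 2) * (n + 1) ^ k := pad_le hBsize
      have h2 : (B.size + 2) ^ 16 ≤ (c + 2) ^ 16 * (n + 1) ^ (16 * k) := pow16_le h1
      have h3 : B'.size ≤ 800 * (c + 2) ^ 16 * (n + 1) ^ (16 * k + 1) := by
        calc B'.size ≤ 400 * (B.size + 2) ^ 16 * (2 + 2 * n) := hB'size
        _ ≤ 400 * ((c + 2) ^ 16 * (n + 1) ^ (16 * k)) * (2 * (n + 1)) := by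
            apply Nat.mul_le_mul (Nat.mul_le_mul_left _ h2) (two_n_le n)
        _ = 800 * (c + 2) ^ 16 * (n + 1) ^ (16 * k + 1) := by ring
      calc P.size ≤ 5 * B'.size + 2 := hPsize
      _ ≤ 5 * (800 * (c + 2) ^ 16 * (n + 1) ^ (16 * k + 1)) + 2 := by omega
      _ ≤ (5 * (800 * (c + 2) ^ 16) + 2) * (n + 1) ^ (16 * k + 1) := by
          have := one_le_pow n (16 * k + 1)
          nlinarith
    · intro α
      show f n α = true ↔ Accepts P α
      rw [hPsem α, hB'sem α, not_not]
      exact hBcomp α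
  · rintro ⟨c, k, h⟩
    refine ⟨400 * (98 * (c + 1) ^ 4 + 2) ^ 16 * 2, 16 * (4 * k + 1) + 1, fun n => ?_⟩
    obtain ⟨P, hPdeg, hPsize, hPcomp⟩ := h n
    obtain ⟨Bd, hBdsize, hBdsem⟩ := exists_D P hPdeg
    obtain ⟨B', hB'size, hB'sem⟩ := exists_complement Bd
    refine ⟨B', ?_, ?_⟩
    · have h1 : P.size + 1 ≤ (c + 1) * (n + 1) ^ k := by
        have := one_le_pow n k
        nlinarith
      have h2 : (P.size + 1) ^ 4 ≤ (c + 1) ^ 4 * (n + 1) ^ (4 * k) := pow4_le h1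
      have h3 : Bd.size ≤ 98 * (c + 1) ^ 4 * (n + 1) ^ (4 * k + 1) := by
        calc Bd.size ≤ 49 * (P.size + 1) ^ 4 * (2 + 2 * n) := hBdsize
        _ ≤ 49 * ((c + 1) ^ 4 * (n + 1) ^ (4 * k)) * (2 * (n + 1)) := by
            apply Nat.mul_le_mul (Nat.mul_le_mul_left _ h2) (two_n_le n)
        _ = 98 * (c + 1) ^ 4 * (n + 1) ^ (4 * k + 1) := by ring
      have h4 : Bd.size + 2 ≤ (98 * (c + 1) ^ 4 + 2) * (n + 1) ^ (4 * k + 1) := by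
        have := one_le_pow n (4 * k + 1)
        nlinarith
      have h5 : (Bd.size + 2) ^ 16 ≤ (98 * (c + 1) ^ 4 + 2) ^ 16 *
          (n + 1) ^ (16 * (4 * k + 1)) := pow16_le h4
      calc B'.size ≤ 400 * (Bd.size + 2) ^ 16 * (2 + 2 * n) := hB'size
      _ ≤ 400 * ((98 * (c + 1) ^ 4 + 2) ^ 16 * (n + 1) ^ (16 * (4 * k + 1))) *
          (2 * (n + 1)) := by
          apply Nat.mul_le_mul (Nat.mul_le_mul_left _ h5) (two_n_le n)
      _ = (400 * (98 * (c + 1) ^ 4 + 2) ^ 16 * 2) * (n + 1) ^ (16 * (4 * k + 1) + 1) := by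
          ring
    · intro α
      show f n α = true ↔ Sem B' α
      rw [hB'sem α, hBdsem α, not_not]
      exact hPcomp α

end
end NLP

/-- `HGP² = NL/poly` as non-uniform classes: a family of Boolean functions is
computable by polynomial-size nondeterministic branching programs iff it is computable by
polynomial-size hypergraph programs of degree at most 2. -/
theorem stmt_10 (f : ∀ n : ℕ, (Fin n → Bool) → Bool) :
    (∃ c k : ℕ, ∀ n : ℕ, ∃ B : NBP n, B.size ≤ c * (n + 1) ^ k ∧ B.Computes (f n)) ↔
    (∃ c k : ℕ, ∀ n : ℕ, ∃ P : HGP n, P.degLE 2 ∧ P.size ≤ c * (n + 1) ^ k ∧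
        P.Computes (f n)) := by
  exact NLP.main_theorem f
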